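/- arXiv:2107.00896 — 3 statements merged into one kernel-verified Lean document; each statement's English description precedes it below -/
import Mathlib

section
/- Let d ≥ 2, 2 ≤ s ≤ d, Ω a subset of the closed unit ball 𝔹 of ℝ^d, and f ∈ C^{0,α}[0,1] for some 0 < α ≤ 1. Then for every N ∈ ℕ, with J = ⌈(2N+3)d/(s−1)⌉, there exist filters w^(1),…,w^(J) each supported in {0,…,s}, bias vectors b^(1),…,b^(J), a matrix F^{[J+1]} ∈ ℝ^{(2N+3)×(d+Js)} with identical rows, a bias vector b^(J+1) ∈ ℝ^{2N+3}, and c ∈ ℝ^{2N+3} with ‖c‖_∞ ≤ 4N‖f‖_∞/(1+4d), such that the network output h^(J+1)(x) = σ(F^{[J+1]} h^(J)(x) − b^(J+1)), where h^(0)(x)=x and h^(j)(x)=σ(T^{w^(j)} h^(j−1)(x) − b^(j)) for j = 1,…,J, satisfies sup_{x∈Ω} |c · h^(J+1)(x) − f(|x|²)| ≤ 3(1+4d)^α |f|_{C^{0,α}} N^{−α}. -/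
open Finset

/-- ReLU activation. -/
noncomputable def relu (u : ℝ) : ℝ := max u 0

/-- ceiling of `m / n` for natural numbers. -/
def ceilDiv' (m n : ℕ) : ℕ := (m + n - 1) / n

/-- A filter (sequence on ℤ) is supported in `{0, …, s}`. -/
def FilterSupp (s : ℕ) (w : ℤ → ℝ) : Prop :=
  ∀ k : ℤ, (k < 0 ∨ (s : ℤ) < k) → w k = 0

/-- A stack of purely convolutional ReLU layers (no downsampling), with input width `D`:
`h^(0)(v) = v`, `h^(j) = σ(T^{w^(j)} h^(j-1) - b^(j))`, widths `D + j·s`. -/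
noncomputable def convStack (s D : ℕ) (w : ℕ → ℤ → ℝ) (b : ℕ → ℕ → ℝ)
    (v : ℕ → ℝ) : ℕ → ℕ → ℝ
  | 0 => v
  | j + 1 => fun i =>
      relu ((∑ k ∈ Finset.range (D + j * s),
          w (j + 1) ((i : ℤ) - (k : ℤ)) * convStack s D w b v j k) - b (j + 1) i)

/-- View a vector of `ℝ^d` as a sequence (zero-padded). -/
noncomputable def emb (d : ℕ) (x : EuclideanSpace ℝ (Fin d)) : ℕ → ℝ :=
  fun i => if h : i < d then x ⟨i, h⟩ else 0

section AUX
open Polynomial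

noncomputable def cZ (P : ℝ[X]) (k : ℤ) : ℝ := if 0 ≤ k then P.coeff k.toNat else 0

lemma factor12 (P : ℝ[X]) (h1 : 1 ≤ P.natDegree) :
    ∃ A : ℝ[X], A.Monic ∧ A ∣ P ∧ 1 ≤ A.natDegree ∧ A.natDegree ≤ 2 := by
  obtain ⟨g, hM, hI, hd⟩ := P.exists_monic_irreducible_factor
    (Polynomial.not_isUnit_of_natDegree_pos P h1)
  refine ⟨g, hM, hd, ?_, hI.natDegree_le_two⟩
  by_contra h
  push_neg at h
  interval_cases hg : g.natDegree
  exact hI.not_isUnit (hM.natDegree_eq_zero.mp hg ▸ isUnit_one)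

lemma factor_window : ∀ t : ℕ, 1 ≤ t → ∀ P : ℝ[X], P.Monic → t ≤ P.natDegree →
    ∃ A : ℝ[X], A.Monic ∧ A ∣ P ∧ t ≤ A.natDegree ∧ A.natDegree ≤ t + 1 := by
  intro t
  induction t with
  | zero => omega
  | succ t ih =>
    intro _ P hP hdeg
    by_cases ht : t = 0
    · subst ht
      exact factor12 P hdeg
    obtain ⟨A, hA, hAd, h1, h2⟩ := ih (by omega) P hP (by omega)
    rcases eq_or_lt_of_le h2 with he | hlt
    · exact ⟨A, hA, hAd, by omega, by omega⟩
    · -- natDegree A = t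
      have hAt : A.natDegree = t := by omega
      obtain ⟨Q, hQ⟩ := hAd
      have hQm : Q.Monic := hA.of_mul_monic_left (hQ ▸ hP)
      have hQd : 1 ≤ Q.natDegree := by
        have := Polynomial.natDegree_mul hA.ne_zero hQm.ne_zero
        rw [hQ] at hdeg; omega
      obtain ⟨B, hB, hBd, hB1, hB2⟩ := factor12 Q hQd
      refine ⟨A * B, hA.mul hB, ?_, ?_, ?_⟩
      · exact (mul_dvd_mul_left A hBd).trans (hQ ▸ dvd_refl P)
      all_goals rw [Polynomial.natDegree_mul hA.ne_zero hB.ne_zero]; omega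


lemma factor_group (s : ℕ) (hs : 2 ≤ s) : ∀ J : ℕ, ∀ P : ℝ[X], P.Monic →
    P.natDegree ≤ J * (s - 1) →
    ∃ g : ℕ → ℝ[X], (∀ j, (g j).Monic ∧ (g j).natDegree ≤ s) ∧ ∏ j ∈ range J, g j = P := by
  intro J
  induction J with
  | zero =>
    intro P hP hd
    refine ⟨fun _ => 1, fun j => ⟨monic_one, by simp⟩, ?_⟩
    simp [hP.natDegree_eq_zero.mp (by omega)]
  | succ J ih =>
    intro P hP hd
    by_cases hsmall : P.natDegree ≤ s
    · refine ⟨fun j => if j = J then P else 1, fun j => ?_, ?_⟩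
      · rcases eq_or_ne j J with h | h <;> simp [h, hP, hsmall, monic_one]
      · rw [Finset.prod_range_succ, if_pos rfl,
          Finset.prod_eq_one (fun j hj => if_neg (Finset.mem_range.mp hj).ne), one_mul]
    · obtain ⟨A, hA, hAd, h1, h2⟩ := factor_window (s - 1) (by omega) P hP (by omega)
      obtain ⟨Q, hQ⟩ := hAd
      have hQm : Q.Monic := hA.of_mul_monic_left (hQ ▸ hP)
      have hdm := Polynomial.natDegree_mul hA.ne_zero hQm.ne_zero
      rw [hQ] at hd
      rw [hdm] at hd
      have key : (J + 1) * (s - 1) = J * (s - 1) + (s - 1) := by ring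
      rw [key] at hd
      obtain ⟨g, hg, hgp⟩ := ih Q hQm (by omega)
      refine ⟨fun j => if j = J then A else g j, fun j => ?_, ?_⟩
      · rcases eq_or_ne j J with h | h
        · simpa [h] using ⟨hA, by omega⟩
        · simpa [h] using ⟨(hg j).1, (hg j).2⟩
      · rw [Finset.prod_range_succ, if_pos rfl,
          Finset.prod_congr rfl (fun j hj => if_neg (Finset.mem_range.mp hj).ne), hgp, hQ,
          mul_comm]

noncomputable def combP (N d : ℕ) : ℝ[X] := ∑ m ∈ Finset.range (2*N+3), X^(m*d)


lemma combP_coeff (N d : ℕ) (hd : 0 < d) (k : ℕ) :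
    (combP N d).coeff k = if d ∣ k ∧ k / d < 2*N+3 then 1 else 0 := by
  rw [combP, Polynomial.finset_sum_coeff]
  simp only [Polynomial.coeff_X_pow]
  by_cases h : d ∣ k ∧ k / d < 2*N+3
  · rw [if_pos h]
    rw [Finset.sum_eq_single (k / d)]
    · rw [if_pos (Nat.div_mul_cancel h.1).symm]
    · intro m _ hm
      exact if_neg (fun he => hm (by rw [he, Nat.mul_div_cancel m hd]))
    · exact fun hm => absurd (Finset.mem_range.mpr h.2) hm
  · rw [if_neg h]
    refine Finset.sum_eq_zero fun m hm => if_neg fun he => h ⟨by rw [he]; exact dvd_mul_left d m,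
      by rw [he, Nat.mul_div_cancel m hd]; exact Finset.mem_range.mp hm⟩

lemma combP_monic (N d : ℕ) (hd : 0 < d) : (combP N d).Monic ∧
    (combP N d).natDegree = (2*N+2)*d := by
  have hdeg : (combP N d).natDegree ≤ (2*N+2)*d := by
    apply Polynomial.natDegree_sum_le_of_forall_le
    intro m hm
    rw [Polynomial.natDegree_X_pow]
    exact Nat.mul_le_mul_right d (by have := Finset.mem_range.mp hm; omega)
  have hc : (combP N d).coeff ((2*N+2)*d) = 1 := by
    rw [combP_coeff N d hd, if_pos ⟨dvd_mul_left d _, by rw [Nat.mul_div_cancel _ hd]; omega⟩]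
  exact ⟨Polynomial.monic_of_natDegree_le_of_coeff_eq_one ((2*N+2)*d) hdeg hc,
    le_antisymm hdeg (Polynomial.le_natDegree_of_ne_zero (by rw [hc]; norm_num))⟩

lemma combP_lin (N d : ℕ) (hd : 0 < d) (x : ℕ → ℝ) (i : ℕ) (hi : i < (2*N+3)*d) :
    ∑ l ∈ Finset.range d, cZ (combP N d) ((i:ℤ) - (l:ℤ)) * x l = x (i % d) := by
  rw [Finset.sum_eq_single (i % d)]
  · have hle : i % d ≤ i := Nat.mod_le i d
    have h0 : (0:ℤ) ≤ (i:ℤ) - (i % d : ℕ) := by omega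
    have ht : ((i:ℤ) - (i % d : ℕ)).toNat = i - i % d := by omega
    have hlt : (i - i % d) / d < 2*N+3 := by
      apply Nat.div_lt_of_lt_mul
      rw [mul_comm]
      exact lt_of_le_of_lt (Nat.sub_le _ _) hi
    rw [cZ, if_pos h0, ht, combP_coeff N d hd, if_pos ⟨Nat.dvd_sub_mod i, hlt⟩, one_mul]
  · intro l hl hlne
    have hz : cZ (combP N d) ((i:ℤ) - l) = 0 := by
      rw [cZ]
      by_cases h0 : (0:ℤ) ≤ (i:ℤ) - l
      · rw [if_pos h0, combP_coeff N d hd, if_neg]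
        rintro ⟨hdvd, -⟩
        have hlt : (l:ℕ) < d := Finset.mem_range.mp hl
        have ht : ((i:ℤ) - l).toNat = i - l := by omega
        rw [ht] at hdvd
        obtain ⟨t, htt⟩ := hdvd
        have hli : l ≤ i := by omega
        have : i = l + d * t := by omega
        apply hlne
        rw [this, Nat.add_mul_mod_self_left, Nat.mod_eq_of_lt hlt]
      · rw [if_neg h0]
    rw [hz, zero_mul]
  · exact fun h => absurd (Finset.mem_range.mpr (Nat.mod_lt i hd)) h

lemma combP_lin_zero (N d : ℕ) (hd : 0 < d) (x : ℕ → ℝ) (i : ℕ) (hi : (2*N+3)*d ≤ i) :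
    ∑ l ∈ Finset.range d, cZ (combP N d) ((i:ℤ) - (l:ℤ)) * x l = 0 := by
  refine Finset.sum_eq_zero fun l hl => ?_
  have hlt : (l:ℕ) < d := Finset.mem_range.mp hl
  have hdi : d ≤ (2*N+3)*d := Nat.le_mul_of_pos_left d (by omega)
  have h0 : (0:ℤ) ≤ (i:ℤ) - l := by omega
  have ht : ((i:ℤ) - l).toNat = i - l := by omega
  rw [cZ, if_pos h0, ht, combP_coeff N d hd, if_neg, zero_mul]
  rintro ⟨⟨t, htt⟩, hlt2⟩
  rw [htt, Nat.mul_div_cancel_left t hd] at hlt2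
  have hmul : d * t ≤ d * (2*N+2) := Nat.mul_le_mul_left d (by omega)
  have h1 : (2*N+3)*d = (2*N+2)*d + d := by ring
  have h2 : d*(2*N+2) = (2*N+2)*d := by ring
  omega
lemma cZ_neg (P : ℝ[X]) (k : ℤ) (hk : k < 0) : cZ P k = 0 := if_neg (by omega)

lemma cZ_nat (P : ℝ[X]) (k : ℕ) : cZ P (k : ℤ) = P.coeff k := by
  rw [cZ, if_pos (by positivity)]; norm_num

lemma cZ_mul (A B : ℝ[X]) (n : ℤ) (R : ℕ) (hR : B.natDegree < R) :
    cZ (A*B) n = ∑ k ∈ Finset.range R, cZ A (n - k) * B.coeff k := by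
  rcases lt_or_ge n 0 with hn | hn
  · rw [cZ_neg _ _ hn]
    exact (Finset.sum_eq_zero fun k _ => by rw [cZ_neg _ _ (by omega), zero_mul]).symm
  · obtain ⟨m, rfl⟩ : ∃ m : ℕ, n = (m : ℤ) := ⟨n.toNat, by omega⟩
    have key : ∀ T : ℕ, m + 1 ≤ T → R ≤ T →
        (∑ k ∈ Finset.range T, cZ A ((m:ℤ) - k) * B.coeff k)
        = ∑ k ∈ Finset.range R, cZ A ((m:ℤ) - k) * B.coeff k := by
      intro T h1 h2
      apply (Finset.sum_subset (Finset.range_subset_range.mpr h2) _).symm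
      intro k _ hk
      rw [Polynomial.coeff_eq_zero_of_natDegree_lt (by
        have := Finset.mem_range.not.mp hk; omega), mul_zero]
    rw [← key (max R (m+1)) (le_max_right _ _) (le_max_left _ _)]
    have expand : cZ (A*B) (m:ℤ) = ∑ k ∈ Finset.range (m+1), cZ A ((m:ℤ) - k) * B.coeff k := by
      rw [cZ_nat, mul_comm, Polynomial.coeff_mul,
        Finset.Nat.sum_antidiagonal_eq_sum_range_succ (fun a b => B.coeff a * A.coeff b)]
      apply Finset.sum_congr rfl
      intro k hk
      have hk' : k ≤ m := by have := Finset.mem_range.mp hk; omega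
      have : ((m:ℤ) - k) = ((m - k : ℕ) : ℤ) := by omega
      rw [this, cZ_nat, mul_comm]
    rw [expand]
    apply Finset.sum_subset (Finset.range_subset_range.mpr (le_max_right _ _))
    intro k _ hk
    rw [cZ_neg _ _ (by have := Finset.mem_range.not.mp hk; omega), zero_mul]

lemma cZ_mul' (A B : ℝ[X]) (i l : ℕ) (R : ℕ) (hR : B.natDegree + l < R) :
    ∑ k ∈ Finset.range R, cZ A ((i:ℤ) - k) * cZ B ((k:ℤ) - l) = cZ (A*B) ((i:ℤ) - l) := by
  have h1 : ∀ k ∈ Finset.range l, cZ A ((i:ℤ) - k) * cZ B ((k:ℤ) - l) = 0 := by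
    intro k hk
    rw [cZ_neg B _ (by have := Finset.mem_range.mp hk; omega), mul_zero]
  have hsplit : Finset.range R = Finset.range l ∪ Finset.Ico l R := by
    rw [Finset.range_eq_Ico, Finset.range_eq_Ico]
    exact (Finset.Ico_union_Ico_eq_Ico (by omega : 0 ≤ l) (by omega : l ≤ R)).symm
  rw [hsplit, Finset.sum_union (by
      rw [Finset.range_eq_Ico]
      exact Finset.Ico_disjoint_Ico_consecutive 0 l R),
    Finset.sum_eq_zero h1, zero_add, Finset.sum_Ico_eq_sum_range]
  have : ∀ k ∈ Finset.range (R - l), cZ A ((i:ℤ) - (l + k : ℕ)) * cZ B (((l + k : ℕ):ℤ) - l)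
      = cZ A (((i:ℤ) - l) - k) * B.coeff k := by
    intro k _
    have e1 : ((i:ℤ) - (l + k : ℕ)) = ((i:ℤ) - l) - k := by push_cast; ring
    have e2 : (((l + k : ℕ):ℤ) - l) = (k:ℤ) := by push_cast; ring
    rw [e1, e2, cZ_nat]
  rw [Finset.sum_congr rfl this, ← cZ_mul A B ((i:ℤ) - l) (R - l) (by omega)]

section CONV
variable (d s J : ℕ) (g : ℕ → ℝ[X]) (u : ℕ → ℝ)

noncomputable def wF : ℕ → ℤ → ℝ := fun j k => if j = 0 then 0 else cZ (g (j-1)) k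
noncomputable def VP : ℕ → ℝ[X] := fun j => ∏ t ∈ Finset.range j, g t
noncomputable def MC : ℕ → ℝ := fun j =>
  if j = 0 then 0 else 1 + ∑ k ∈ Finset.range (j*s+1), |(VP g j).coeff k|
noncomputable def SS : ℕ → ℕ → ℝ := fun j i =>
  ∑ k ∈ Finset.range (d + j*s), wF g (j+1) ((i:ℤ) - (k:ℤ))
noncomputable def bB : ℕ → ℕ → ℝ := fun j i =>
  if j = 0 then 0 else if j < J then SS d s g (j-1) i * MC s g (j-1) - MC s g j
  else if j = J then SS d s g (J-1) i * MC s g (J-1) + u (i/d) else 0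

lemma VP_deg (hg : ∀ j, (g j).natDegree ≤ s) (j : ℕ) : (VP g j).natDegree ≤ j * s := by
  refine le_trans (Polynomial.natDegree_prod_le _ _) ?_
  calc ∑ t ∈ Finset.range j, (g t).natDegree ≤ ∑ t ∈ Finset.range j, s :=
        Finset.sum_le_sum fun t _ => hg t
    _ = j * s := by rw [Finset.sum_const, Finset.card_range, smul_eq_mul]

lemma lin_bound (P : ℝ[X]) (D : ℕ) (hP : P.natDegree ≤ D) (x : ℕ → ℝ)
    (hx : ∀ l, |x l| ≤ 1) (i : ℕ) :
    |∑ l ∈ Finset.range d, cZ P ((i:ℤ) - (l:ℤ)) * x l| ≤ ∑ k ∈ Finset.range (D+1), |P.coeff k| := by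
  refine le_trans (Finset.abs_sum_le_sum_abs _ _) ?_
  have step1 : ∀ l ∈ Finset.range d, |cZ P ((i:ℤ) - l) * x l| ≤ |cZ P ((i:ℤ) - l)| := by
    intro l _
    rw [abs_mul]
    exact mul_le_of_le_one_right (abs_nonneg _) (hx l)
  refine le_trans (Finset.sum_le_sum step1) ?_
  set F := (Finset.range d).filter (fun l => l ≤ i ∧ i - l ≤ D) with hF
  have heq : ∑ l ∈ Finset.range d, |cZ P ((i:ℤ) - l)| = ∑ l ∈ F, |cZ P ((i:ℤ) - l)| := by
    refine (Finset.sum_filter_of_ne ?_).symm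
    intro l _ hne
    by_contra hcon
    push_neg at hcon
    rcases le_or_gt l i with hle | hlt
    · have hD : D < i - l := hcon hle
      have : ((i:ℤ) - l) = ((i - l : ℕ) : ℤ) := by omega
      rw [this, cZ_nat, Polynomial.coeff_eq_zero_of_natDegree_lt (by omega)] at hne
      simp at hne
    · rw [cZ_neg _ _ (by omega)] at hne
      simp at hne
  rw [heq]
  have himg : ∑ l ∈ F, |cZ P ((i:ℤ) - l)| = ∑ k ∈ F.image (fun l => i - l), |P.coeff k| := by
    rw [Finset.sum_image (by
      intro a ha b hb hab
      have ha' := (Finset.mem_filter.mp ha).2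
      have hb' := (Finset.mem_filter.mp hb).2
      have hab' : i - a = i - b := hab
      omega)]
    refine Finset.sum_congr rfl fun l hl => ?_
    have hl' := (Finset.mem_filter.mp hl).2
    have : ((i:ℤ) - l) = ((i - l : ℕ) : ℤ) := by omega
    rw [this, cZ_nat]
  rw [himg]
  refine Finset.sum_le_sum_of_subset_of_nonneg ?_ (fun k _ _ => abs_nonneg _)
  intro k hk
  obtain ⟨l, hl, rfl⟩ := Finset.mem_image.mp hk
  have hl' := (Finset.mem_filter.mp hl).2
  exact Finset.mem_range.mpr (by omega)

lemma layer_alg (hg : ∀ j, (g j).natDegree ≤ s) (x : ℕ → ℝ) (j i : ℕ) :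
    ∑ k ∈ Finset.range (d + j*s), wF g (j+1) ((i:ℤ) - (k:ℤ)) *
      ((∑ l ∈ Finset.range d, cZ (VP g j) ((k:ℤ) - (l:ℤ)) * x l) + MC s g j)
    = (∑ l ∈ Finset.range d, cZ (VP g (j+1)) ((i:ℤ) - (l:ℤ)) * x l)
      + MC s g j * SS d s g j i := by
  have hw : wF g (j+1) = cZ (g j) := by
    funext k
    simp [wF]
  simp only [hw, mul_add, Finset.sum_add_distrib]
  congr 1
  · -- main conv part
    have swap : ∑ k ∈ Finset.range (d + j*s), cZ (g j) ((i:ℤ) - k) *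
        (∑ l ∈ Finset.range d, cZ (VP g j) ((k:ℤ) - l) * x l)
        = ∑ l ∈ Finset.range d, (∑ k ∈ Finset.range (d + j*s),
            cZ (g j) ((i:ℤ) - k) * cZ (VP g j) ((k:ℤ) - l)) * x l := by
      simp only [Finset.mul_sum, Finset.sum_mul]
      rw [Finset.sum_comm]
      apply Finset.sum_congr rfl
      intro l _
      apply Finset.sum_congr rfl
      intro k _
      ring
    rw [swap]
    refine Finset.sum_congr rfl fun l hl => ?_
    have hl' : l < d := Finset.mem_range.mp hl
    rw [cZ_mul' (g j) (VP g j) i l (d + j*s) (by have := VP_deg s g hg j; omega)]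
    have : VP g (j+1) = g j * VP g j := by
      rw [VP, VP, Finset.prod_range_succ, mul_comm]
    rw [this]
  · rw [SS, Finset.mul_sum]
    refine Finset.sum_congr rfl fun k _ => ?_
    rw [hw]
    ring

lemma MC_pos (j : ℕ) (hj : 1 ≤ j) : 1 ≤ MC s g j := by
  rw [MC, if_neg (by omega)]
  have : 0 ≤ ∑ k ∈ Finset.range (j*s+1), |(VP g j).coeff k| :=
    Finset.sum_nonneg fun k _ => abs_nonneg _
  linarith

lemma lin_le_MC (hg : ∀ j, (g j).natDegree ≤ s) (x : ℕ → ℝ) (hx : ∀ l, |x l| ≤ 1)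
    (j i : ℕ) (hj : 1 ≤ j) :
    |∑ l ∈ Finset.range d, cZ (VP g j) ((i:ℤ) - (l:ℤ)) * x l| ≤ MC s g j - 1 := by
  rw [MC, if_neg (by omega)]
  have := lin_bound d (VP g j) (j*s) (VP_deg s g hg j) x hx i
  linarith

lemma conv_linear (hg : ∀ j, (g j).natDegree ≤ s) (x : ℕ → ℝ) (hx : ∀ l, |x l| ≤ 1)
    (hx0 : ∀ l, d ≤ l → x l = 0) :
    ∀ j, j < J → ∀ i, convStack s d (wF g) (bB d s J g u) x j i
      = (∑ l ∈ Finset.range d, cZ (VP g j) ((i:ℤ) - (l:ℤ)) * x l) + MC s g j := by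
  intro j
  induction j with
  | zero =>
    intro _ i
    simp only [convStack, MC, if_pos rfl, add_zero]
    have hcz : ∀ l : ℕ, cZ (VP g 0) ((i:ℤ) - l) = if l = i then 1 else 0 := by
      intro l
      rw [VP, Finset.prod_range_zero, cZ]
      rcases eq_or_ne l i with h | h
      · rw [if_pos h, if_pos (by omega)]
        have : ((i:ℤ) - l).toNat = 0 := by omega
        rw [this, Polynomial.coeff_one_zero]
      · rw [if_neg h]
        rcases lt_or_ge ((i:ℤ) - l) 0 with hlt | hle
        · rw [if_neg (by omega)]
        · rw [if_pos hle, Polynomial.coeff_one, if_neg (by omega)]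
    have : ∑ l ∈ Finset.range d, cZ (VP g 0) ((i:ℤ) - l) * x l
        = ∑ l ∈ Finset.range d, if l = i then x l else 0 := by
      refine Finset.sum_congr rfl fun l _ => ?_
      rw [hcz l]
      split <;> simp
    rw [this, Finset.sum_ite_eq' (Finset.range d) i x]
    rcases lt_or_ge i d with h | h
    · rw [if_pos (Finset.mem_range.mpr h)]
      simp
    · rw [if_neg (by simp; omega), hx0 i h]
      simp
  | succ j ih =>
    intro hJ i
    have hj : j < J := by omega
    simp only [convStack]
    rw [Finset.sum_congr rfl (fun k _ => by rw [ih hj k]), layer_alg d s g hg x j i]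
    rw [bB, if_neg (by omega), if_pos hJ]
    simp only [Nat.add_sub_cancel]
    have harg : (∑ l ∈ Finset.range d, cZ (VP g (j+1)) ((i:ℤ) - (l:ℤ)) * x l)
        + MC s g j * SS d s g j i - (SS d s g j i * MC s g j - MC s g (j+1))
        = (∑ l ∈ Finset.range d, cZ (VP g (j+1)) ((i:ℤ) - (l:ℤ)) * x l) + MC s g (j+1) := by
      ring
    rw [harg]
    have hb := abs_le.mp (lin_le_MC d s g hg x hx (j+1) i (by omega))
    have hm := MC_pos s g (j+1) (by omega)
    simp only [relu]
    rw [max_eq_left (by linarith)]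

lemma conv_last (hJ : 1 ≤ J) (hg : ∀ j, (g j).natDegree ≤ s) (x : ℕ → ℝ)
    (hx : ∀ l, |x l| ≤ 1) (hx0 : ∀ l, d ≤ l → x l = 0) (i : ℕ) :
    convStack s d (wF g) (bB d s J g u) x J i
      = relu ((∑ l ∈ Finset.range d, cZ (VP g J) ((i:ℤ) - (l:ℤ)) * x l) - u (i/d)) := by
  obtain ⟨J', rfl⟩ : ∃ J', J = J' + 1 := ⟨J - 1, by omega⟩
  simp only [convStack]
  rw [Finset.sum_congr rfl (fun k _ => by
    rw [conv_linear d s (J'+1) g u hg x hx hx0 J' (by omega) k]),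
    layer_alg d s g hg x J' i]
  rw [bB, if_neg (by omega), if_neg (by omega), if_pos rfl]
  simp only [Nat.add_sub_cancel]
  congr 1
  ring

end CONV

noncomputable def gam (N : ℕ) (m : ℕ) : ℝ :=
  if m = 0 then 1/(N:ℝ) - 2 else if m < 2*N then 2/(N:ℝ) else 0
noncomputable def ukn (N : ℕ) (m : ℕ) : ℝ := (m:ℝ)/(N:ℝ) - 1

lemma qsum (N : ℕ) (hN : 1 ≤ N) (u : ℝ) :
    ∀ K : ℕ, 1 ≤ K → K ≤ 2*N →
    ∑ m ∈ Finset.range K, gam N m * (u - ukn N m)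
      = ((2*(K:ℝ)-1)/(N:ℝ) - 2)*(u+1) - (K:ℝ)*((K:ℝ)-1)/(N:ℝ)^2 := by
  have hN0 : (N:ℝ) ≠ 0 := by positivity
  intro K
  induction K with
  | zero => omega
  | succ K ih =>
    intro _ hK2
    rcases Nat.eq_zero_or_pos K with h0 | h1
    · subst h0
      rw [Finset.sum_range_one, gam, if_pos rfl, ukn]
      push_cast
      field_simp
      try ring
      try exact Or.inl trivial
    · rw [Finset.sum_range_succ, ih h1 (by omega)]
      have hgam : gam N K = 2/(N:ℝ) := by
        rw [gam, if_neg (by omega), if_pos (by omega)]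
      rw [hgam, ukn]
      push_cast
      field_simp
      ring

lemma qgap (N : ℕ) (hN : 1 ≤ N) (u : ℝ) (hu1 : -1 ≤ u) (hu2 : u ≤ 1) :
    u^2 - 1 ≤ (∑ m ∈ Finset.range (2*N+3), gam N m * relu (u - ukn N m)) ∧
    (∑ m ∈ Finset.range (2*N+3), gam N m * relu (u - ukn N m)) ≤ u^2 - 1 + 1/(4*(N:ℝ)^2) := by
  have hN0 : (0:ℝ) < N := by positivity
  set t : ℝ := u + 1 with ht
  have ht0 : 0 ≤ t := by simp only [ht]; linarith
  have ht2 : t ≤ 2 := by simp only [ht]; linarith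
  set K : ℕ := min (⌊(N:ℝ)*t⌋₊ + 1) (2*N) with hK
  have hK1 : 1 ≤ K := by simp only [hK]; omega
  have hK2 : K ≤ 2*N := min_le_right _ _
  have hKfl : K ≤ ⌊(N:ℝ)*t⌋₊ + 1 := min_le_left _ _
  have hfl : (⌊(N:ℝ)*t⌋₊ : ℝ) ≤ (N:ℝ)*t := Nat.floor_le (by positivity)
  have hlow : ((K:ℝ) - 1)/(N:ℝ) ≤ t := by
    have h1 : (K:ℝ) ≤ (⌊(N:ℝ)*t⌋₊ : ℝ) + 1 := by exact_mod_cast hKfl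
    rw [div_le_iff₀ hN0]
    linarith
  have hhigh : t ≤ (K:ℝ)/(N:ℝ) := by
    rcases le_or_gt (⌊(N:ℝ)*t⌋₊ + 1) (2*N) with h | h
    · have hKe : K = ⌊(N:ℝ)*t⌋₊ + 1 := by omega
      have h2 : (N:ℝ)*t < ⌊(N:ℝ)*t⌋₊ + 1 := Nat.lt_floor_add_one _
      rw [le_div_iff₀ hN0, hKe]
      push_cast
      linarith
    · have hKe : K = 2*N := by omega
      rw [le_div_iff₀ hN0, hKe]
      push_cast
      nlinarith
  have hzero : ∀ m ∈ Finset.range (2*N+3), m ∉ Finset.range K →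
      gam N m * relu (u - ukn N m) = 0 := by
    intro m _ hmK
    have hmK' : K ≤ m := by simpa using Finset.mem_range.not.mp hmK
    rcases lt_or_ge m (2*N) with hm2 | hm2
    · have hKm : (K:ℝ) ≤ (m:ℝ) := by exact_mod_cast hmK'
      have hdd : (K:ℝ)/(N:ℝ) ≤ (m:ℝ)/(N:ℝ) := by gcongr
      have hum : u ≤ ukn N m := by
        rw [ukn]
        have := le_trans hhigh hdd
        linarith
      simp only [relu]
      rw [max_eq_right (by linarith), mul_zero]
    · rw [gam, if_neg (by omega), if_neg (by omega), zero_mul]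
  have hlin : ∀ m ∈ Finset.range K, gam N m * relu (u - ukn N m)
      = gam N m * (u - ukn N m) := by
    intro m hm
    have hmK : m < K := Finset.mem_range.mp hm
    have hmf : m ≤ ⌊(N:ℝ)*t⌋₊ := by omega
    have hmr : (m:ℝ) ≤ (N:ℝ)*t := le_trans (by exact_mod_cast hmf) hfl
    have hmr' : (m:ℝ) ≤ (N:ℝ)*(u+1) := by rw [← ht]; exact hmr
    have hmu : ukn N m ≤ u := by
      rw [ukn, sub_le_iff_le_add, div_le_iff₀ hN0]
      linarith
    simp only [relu]
    rw [max_eq_left (by linarith)]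
  have hred : ∑ m ∈ Finset.range (2*N+3), gam N m * relu (u - ukn N m)
      = ∑ m ∈ Finset.range K, gam N m * (u - ukn N m) := by
    rw [← Finset.sum_subset (Finset.range_subset_range.mpr (by omega : K ≤ 2*N+3)) hzero]
    exact Finset.sum_congr rfl hlin
  rw [hred, qsum N hN u K hK1 hK2]
  have hd1 : ((K:ℝ)-1) ≤ (N:ℝ)*t := by
    rw [div_le_iff₀ hN0] at hlow
    linarith
  have hd2 : (N:ℝ)*t ≤ (K:ℝ) := by
    rw [le_div_iff₀ hN0] at hhigh
    linarith
  constructor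
  · rw [← sub_nonneg]
    have key : ((2*(K:ℝ)-1)/(N:ℝ) - 2)*(u+1) - (K:ℝ)*((K:ℝ)-1)/(N:ℝ)^2 - (u^2 - 1)
        = ((K:ℝ) - (N:ℝ)*t) * ((N:ℝ)*t - ((K:ℝ)-1)) / (N:ℝ)^2 := by
      rw [ht]
      field_simp
      ring
    rw [key]
    apply div_nonneg (mul_nonneg (by linarith) (by linarith)) (by positivity)
  · have key : ((2*(K:ℝ)-1)/(N:ℝ) - 2)*(u+1) - (K:ℝ)*((K:ℝ)-1)/(N:ℝ)^2 - (u^2 - 1)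
        = ((K:ℝ) - (N:ℝ)*t) * ((N:ℝ)*t - ((K:ℝ)-1)) / (N:ℝ)^2 := by
      rw [ht]
      field_simp
      ring
    have hprod : ((K:ℝ) - (N:ℝ)*t) * ((N:ℝ)*t - ((K:ℝ)-1)) ≤ 1/4 := by
      have hid : ((K:ℝ) - (N:ℝ)*t) * ((N:ℝ)*t - ((K:ℝ)-1))
          = 1/4 - (((K:ℝ) - (N:ℝ)*t) - ((N:ℝ)*t - ((K:ℝ)-1)))^2/4 := by ring
      rw [hid]
      nlinarith [sq_nonneg (((K:ℝ) - (N:ℝ)*t) - ((N:ℝ)*t - ((K:ℝ)-1)))]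
    have hdiv : ((K:ℝ) - (N:ℝ)*t) * ((N:ℝ)*t - ((K:ℝ)-1)) / (N:ℝ)^2 ≤ (1/4) / (N:ℝ)^2 := by
      gcongr
    have heq : (1/4) / (N:ℝ)^2 = 1/(4*(N:ℝ)^2) := by ring
    linarith


section OUTER
variable (f : ℝ → ℝ) (dR : ℝ) (N : ℕ)

noncomputable def hh (dR : ℝ) (N : ℕ) : ℝ := (1+dR)/(2*(N:ℝ)+1)
noncomputable def vv (dR : ℝ) (N : ℕ) (j : ℕ) : ℝ := -dR + (j:ℝ)*hh dR N
noncomputable def Vb (dR : ℝ) (N : ℕ) (j : ℕ) : ℝ := (1+4*dR) * vv dR N j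
noncomputable def Dl (dR : ℝ) (N : ℕ) : ℝ := (1+4*dR) * hh dR N
noncomputable def FF (f : ℝ → ℝ) (dR : ℝ) (N : ℕ) (j : ℕ) : ℝ := f (min ((j:ℝ)*hh dR N) 1)
noncomputable def sl (f : ℝ → ℝ) (dR : ℝ) (N : ℕ) (j : ℕ) : ℝ :=
  (FF f dR N (j+1) - FF f dR N j)/Dl dR N
noncomputable def kap (f : ℝ → ℝ) (dR : ℝ) : ℝ := f 0 / (1+4*dR)
noncomputable def cc (f : ℝ → ℝ) (dR : ℝ) (N : ℕ) (j : ℕ) : ℝ :=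
  if j = 2*N+2 then kap f dR else if j = 0 then sl f dR N 0 - kap f dR
  else sl f dR N j - sl f dR N (j-1)
noncomputable def bb2 (f : ℝ → ℝ) (dR : ℝ) (N : ℕ) (j : ℕ) : ℝ :=
  if j = 2*N+2 then Vb dR N 0 - (1+4*dR) else Vb dR N j

lemma hh_pos (hd : (2:ℝ) ≤ dR) : 0 < hh dR N := by
  rw [hh]
  positivity

lemma Dl_pos (hd : (2:ℝ) ≤ dR) : 0 < Dl dR N := by
  rw [Dl]
  have := hh_pos dR N hd
  positivity

lemma Vb_succ (j : ℕ) : Vb dR N (j+1) = Vb dR N j + Dl dR N := by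
  rw [Vb, Vb, Dl, vv, vv]
  push_cast
  ring

lemma Vb_mono (hd : (2:ℝ) ≤ dR) {a bj : ℕ} (h : a ≤ bj) : Vb dR N a ≤ Vb dR N bj := by
  rw [Vb, Vb, vv, vv]
  have h1 : (0:ℝ) < 1 + 4*dR := by linarith
  have h2 := hh_pos dR N hd
  have h3 : (a:ℝ) ≤ (bj:ℝ) := by exact_mod_cast h
  have h4 : (a:ℝ) * hh dR N ≤ (bj:ℝ) * hh dR N := mul_le_mul_of_nonneg_right h3 h2.le
  nlinarith

lemma sl_def (hd : (2:ℝ) ≤ dR) (j : ℕ) : sl f dR N j * Dl dR N = FF f dR N (j+1) - FF f dR N j := by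
  rw [sl, div_mul_cancel₀]
  exact ne_of_gt (Dl_pos dR N hd)

lemma innerSumPL (hd : (2:ℝ) ≤ dR) (T : ℝ) : ∀ j, j ≤ 2*N+1 →
    ∑ j' ∈ Finset.range (j+1), cc f dR N j' * (T - Vb dR N j')
      = (sl f dR N j - kap f dR)*(T - Vb dR N j)
        + (FF f dR N j - FF f dR N 0) - kap f dR * (Vb dR N j - Vb dR N 0) := by
  intro j
  induction j with
  | zero =>
    intro _
    rw [Finset.sum_range_one, cc, if_neg (by omega), if_pos rfl]
    ring
  | succ j ih =>
    intro hj
    rw [Finset.sum_range_succ, ih (by omega), cc, if_neg (by omega), if_neg (by omega)]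
    simp only [Nat.add_sub_cancel]
    have hstep := sl_def f dR N hd j
    have hV := Vb_succ dR N j
    linear_combination hstep + sl f dR N j * hV

lemma outer_eval (hd : (2:ℝ) ≤ dR) (T : ℝ) (j : ℕ) (hj : j ≤ 2*N) (h1 : Vb dR N j ≤ T)
    (h2 : T ≤ Vb dR N (j+1)) :
    ∑ j' ∈ Finset.range (2*N+3), cc f dR N j' * relu (T - bb2 f dR N j')
      = FF f dR N j + sl f dR N j * (T - Vb dR N j) := by
  have h14 : (0:ℝ) < 1 + 4*dR := by linarith
  have hkap : kap f dR * (1+4*dR) = FF f dR N 0 := by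
    rw [kap, FF]
    push_cast
    rw [zero_mul, min_eq_left zero_le_one, div_mul_cancel₀ _ (ne_of_gt h14)]
  have hsplit : (2*N+3) = (2*N+2)+1 := by omega
  rw [hsplit, Finset.sum_range_succ]
  -- last unit
  have hlast : cc f dR N (2*N+2) * relu (T - bb2 f dR N (2*N+2))
      = kap f dR * (T - Vb dR N 0 + (1+4*dR)) := by
    rw [cc, if_pos rfl, bb2, if_pos rfl]
    have hTV : Vb dR N 0 ≤ T := le_trans (Vb_mono dR N hd (Nat.zero_le j)) h1
    simp only [relu]
    rw [max_eq_left (by linarith)]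
    ring
  rw [hlast]
  -- main: reduce to range (j+1)
  have hmain : ∑ j' ∈ Finset.range (2*N+2), cc f dR N j' * relu (T - bb2 f dR N j')
      = ∑ j' ∈ Finset.range (j+1), cc f dR N j' * (T - Vb dR N j') := by
    rw [← Finset.sum_subset (Finset.range_subset_range.mpr (by omega : j+1 ≤ 2*N+2))]
    · refine Finset.sum_congr rfl fun j' hj' => ?_
      have hj'j : j' < j+1 := Finset.mem_range.mp hj'
      rw [bb2, if_neg (by omega)]
      have : Vb dR N j' ≤ T := le_trans (Vb_mono dR N hd (by omega)) h1
      simp only [relu]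
      rw [max_eq_left (by linarith)]
    · intro j' hj' hj'n
      have hge : j+1 ≤ j' := by simpa using Finset.mem_range.not.mp hj'n
      have hlt : j' < 2*N+2 := Finset.mem_range.mp hj'
      rw [bb2, if_neg (by omega)]
      have : T ≤ Vb dR N j' := le_trans h2 (Vb_mono dR N hd (by omega))
      simp only [relu]
      rw [max_eq_right (by linarith), mul_zero]
  rw [hmain, innerSumPL f dR N hd T j (by omega)]
  linear_combination hkap
end OUTER
lemma cc_bound (f : ℝ → ℝ) (dR : ℝ) (N : ℕ) (hd : (2:ℝ) ≤ dR) (hN : 1 ≤ N) (Mf : ℝ)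
    (hMf : ∀ j : ℕ, |FF f dR N j| ≤ Mf) (hf0 : |f 0| ≤ Mf) :
    ∀ j, |cc f dR N j| ≤ 4*(N:ℝ)*Mf/(1+4*dR) := by
  have hMf0 : 0 ≤ Mf := le_trans (abs_nonneg _) (hMf 0)
  have h1 : (0:ℝ) < 1+4*dR := by linarith
  have h2 : (0:ℝ) < 1+dR := by linarith
  have hNR : (1:ℝ) ≤ (N:ℝ) := by exact_mod_cast hN
  have h3 : (0:ℝ) < 2*(N:ℝ)+1 := by linarith
  have hDl : Dl dR N = (1+4*dR)*(1+dR)/(2*(N:ℝ)+1) := by rw [Dl, hh]; ring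
  have hDlpos : 0 < Dl dR N := by rw [hDl]; positivity
  have hsl : ∀ j, |sl f dR N j| ≤ 2*Mf*(2*(N:ℝ)+1)/((1+4*dR)*(1+dR)) := by
    intro j
    rw [sl, abs_div, abs_of_pos hDlpos, hDl, div_div_eq_mul_div]
    gcongr
    calc |FF f dR N (j+1) - FF f dR N j| ≤ |FF f dR N (j+1)| + |FF f dR N j| := abs_sub _ _
      _ ≤ 2*Mf := by have := hMf (j+1); have := hMf j; linarith
  have hkapb : |kap f dR| ≤ Mf/(1+4*dR) := by
    rw [kap, abs_div, abs_of_pos h1]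
    gcongr
  have h4 : (0:ℝ) ≤ 4*(N:ℝ)*dR - dR - 3 := by nlinarith
  have h5 : (0:ℝ) ≤ 4*(N:ℝ)*dR - 4*(N:ℝ) - 4 := by nlinarith
  have hrewr : Mf/(1+4*dR) = Mf*(1+dR)/((1+4*dR)*(1+dR)) := by
    field_simp
  have hrewr2 : 4*(N:ℝ)*Mf/(1+4*dR) = 4*(N:ℝ)*Mf*(1+dR)/((1+4*dR)*(1+dR)) := by
    field_simp
  intro j
  rw [cc]
  split
  · calc |kap f dR| ≤ Mf/(1+4*dR) := hkapb
      _ ≤ 4*(N:ℝ)*Mf/(1+4*dR) := by gcongr; nlinarith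
  · split
    · calc |sl f dR N 0 - kap f dR| ≤ |sl f dR N 0| + |kap f dR| := abs_sub _ _
        _ ≤ 2*Mf*(2*(N:ℝ)+1)/((1+4*dR)*(1+dR)) + Mf/(1+4*dR) := by
            have := hsl 0; linarith
        _ ≤ 4*(N:ℝ)*Mf/(1+4*dR) := by
            rw [hrewr, hrewr2, ← add_div,
              div_le_div_iff_of_pos_right (by positivity : (0:ℝ) < (1+4*dR)*(1+dR))]
            nlinarith [mul_nonneg hMf0 h4]
    · calc |sl f dR N j - sl f dR N (j-1)| ≤ |sl f dR N j| + |sl f dR N (j-1)| := abs_sub _ _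
        _ ≤ 2*Mf*(2*(N:ℝ)+1)/((1+4*dR)*(1+dR)) + 2*Mf*(2*(N:ℝ)+1)/((1+4*dR)*(1+dR)) := by
            have := hsl j; have := hsl (j-1); linarith
        _ ≤ 4*(N:ℝ)*Mf/(1+4*dR) := by
            rw [hrewr2, ← add_div,
              div_le_div_iff_of_pos_right (by positivity : (0:ℝ) < (1+4*dR)*(1+dR))]
            nlinarith [mul_nonneg hMf0 h5]


lemma ceil_ge (m n : ℕ) (hn : 1 ≤ n) : m ≤ ceilDiv' m n * n := by
  rw [ceilDiv', mul_comm]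
  have e : n * ((m+n-1)/n) + (m+n-1)%n = m+n-1 := Nat.div_add_mod _ _
  have hr : (m+n-1)%n < n := Nat.mod_lt _ (by omega)
  omega

lemma ceil_one (m n : ℕ) (hm : 1 ≤ m) (hn : 1 ≤ n) : 1 ≤ ceilDiv' m n := by
  rw [ceilDiv', Nat.one_le_div_iff (by omega)]
  omega

lemma sum_grid (K d : ℕ) (f : ℕ → ℝ) :
    ∑ i ∈ Finset.range (K*d), f i = ∑ m ∈ Finset.range K, ∑ r ∈ Finset.range d, f (m*d + r) := by
  induction K with
  | zero => simp
  | succ K ih =>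
    have h1 : (K+1)*d = K*d + d := by ring
    rw [h1, Finset.sum_range_add, ih, Finset.sum_range_succ]


lemma emb_zero (d : ℕ) (x : EuclideanSpace ℝ (Fin d)) (l : ℕ) (h : d ≤ l) : emb d x l = 0 := by
  rw [emb, dif_neg (by omega)]

lemma norm_sq_eq (d : ℕ) (x : EuclideanSpace ℝ (Fin d)) :
    ‖x‖^2 = ∑ r ∈ Finset.range d, (emb d x r)^2 := by
  rw [EuclideanSpace.norm_eq, Real.sq_sqrt (Finset.sum_nonneg fun i _ => sq_nonneg _)]
  rw [← Fin.sum_univ_eq_sum_range (fun r => (emb d x r)^2) d]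
  refine Finset.sum_congr rfl fun i _ => ?_
  rw [emb, dif_pos i.isLt, Real.norm_eq_abs, sq_abs]

lemma emb_le_one (d : ℕ) (x : EuclideanSpace ℝ (Fin d)) (hx : ‖x‖ ≤ 1) (l : ℕ) :
    |emb d x l| ≤ 1 := by
  rcases lt_or_ge l d with h | h
  · have h1 : (emb d x l)^2 ≤ ‖x‖^2 := by
      rw [norm_sq_eq]
      exact Finset.single_le_sum (f := fun r => (emb d x r)^2) (fun r _ => sq_nonneg _)
        (Finset.mem_range.mpr h)
    have h2 : ‖x‖^2 ≤ 1 := by nlinarith [norm_nonneg x]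
    nlinarith [sq_abs (emb d x l), abs_nonneg (emb d x l), sq_nonneg (|emb d x l| - 1)]
  · rw [emb_zero d x l h]
    norm_num

end AUX

set_option maxHeartbeats 1000000

/-- Theorem 2 (rates of approximating radial functions `f(|x|²)` by DCNNs with `J1 = 0`). -/
theorem dcnn_approx_radial
    (d s : ℕ) (hd : 2 ≤ d) (hs : 2 ≤ s) (hsd : s ≤ d)
    (Ω : Set (EuclideanSpace ℝ (Fin d))) (hΩ : Ω ⊆ Metric.closedBall 0 1)
    (f : ℝ → ℝ) (α : ℝ) (hα0 : 0 < α) (hα1 : α ≤ 1) (L Mf : ℝ)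
    (hf : ∀ u ∈ Set.Icc (0 : ℝ) 1, ∀ v ∈ Set.Icc (0 : ℝ) 1,
      |f u - f v| ≤ L * |u - v| ^ α)
    (hMf : ∀ u ∈ Set.Icc (0 : ℝ) 1, |f u| ≤ Mf)
    (N : ℕ) (hN : 1 ≤ N) :
    ∃ (w : ℕ → ℤ → ℝ) (b : ℕ → ℕ → ℝ) (row b2 c : ℕ → ℝ),
      (∀ j, FilterSupp s (w j)) ∧
      (∀ j < 2 * N + 3, |c j| ≤ 4 * (N : ℝ) * Mf / (1 + 4 * (d : ℝ))) ∧
      ∀ x ∈ Ω,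
        |(∑ j ∈ Finset.range (2 * N + 3),
            c j * relu ((∑ k ∈ Finset.range (d + ceilDiv' ((2 * N + 3) * d) (s - 1) * s),
                row k *
                  convStack s d w b (emb d x) (ceilDiv' ((2 * N + 3) * d) (s - 1)) k) - b2 j))
          - f (‖x‖ ^ 2)|
          ≤ 3 * (1 + 4 * (d : ℝ)) ^ α * L * (N : ℝ) ^ (-α) := by
  have hd0 : 0 < d := by omega
  have hN0 : (0:ℝ) < N := by exact_mod_cast hN.trans_lt' (by omega)
  set dR : ℝ := (d:ℝ) with hdRdef
  have hdR : (2:ℝ) ≤ dR := by rw [hdRdef]; exact_mod_cast hd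
  have hNR : (1:ℝ) ≤ (N:ℝ) := by exact_mod_cast hN
  have h14 : (0:ℝ) < 1 + 4*dR := by linarith
  have hMf0 : 0 ≤ Mf := le_trans (abs_nonneg _) (hMf 0 (by norm_num))
  have hL0 : 0 ≤ L := by
    have h := hf 0 (by norm_num) 1 (by norm_num)
    have h1 : |(0:ℝ) - 1| = 1 := by norm_num
    rw [h1, Real.one_rpow, mul_one] at h
    linarith [abs_nonneg (f 0 - f 1)]
  set J := ceilDiv' ((2 * N + 3) * d) (s - 1) with hJdef
  have hs1 : 1 ≤ s - 1 := by omega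
  have hJ1 : 1 ≤ J := ceil_one _ _ (by have := Nat.mul_pos (show 0 < 2*N+3 by omega) hd0; omega) hs1
  have hJm : (2*N+3)*d ≤ J*(s-1) := ceil_ge _ _ hs1
  have hwidth : (2*N+3)*d ≤ d + J*s := by
    have h1 : J*(s-1) ≤ J*s := Nat.mul_le_mul_left J (by omega)
    omega
  have hWm := combP_monic N d hd0
  have hWdeg : (combP N d).natDegree ≤ J*(s-1) := by
    rw [hWm.2]
    have h2 : (2*N+2)*d ≤ (2*N+3)*d := Nat.mul_le_mul_right d (by omega)
    omega
  obtain ⟨g, hg, hgp⟩ := factor_group s hs J (combP N d) hWm.1 hWdeg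
  have hgdeg : ∀ j, (g j).natDegree ≤ s := fun j => (hg j).2
  have hVJ : VP g J = combP N d := by simp only [VP]; exact hgp
  refine ⟨wF g, bB d s J g (ukn N),
    (fun k => if k < (2*N+3)*d then (1+4*dR) * gam N (k/d) else 0),
    bb2 f dR N, cc f dR N, ?_, ?_, ?_⟩
  · -- filter supports
    intro j k hk
    rw [wF]
    split
    · rfl
    · rcases hk with hk | hk
      · exact cZ_neg _ _ hk
      · rw [cZ]
        split
        · apply Polynomial.coeff_eq_zero_of_natDegree_lt
          have := hgdeg (j-1)
          omega
        · rfl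
  · -- coefficient bounds
    intro j _
    have hhp := hh_pos dR N hdR
    have hFFb : ∀ j' : ℕ, |FF f dR N j'| ≤ Mf := by
      intro j'
      apply hMf
      constructor
      · apply le_min (by positivity) zero_le_one
      · exact min_le_right _ _
    exact cc_bound f dR N hdR hN Mf hFFb (hMf 0 (by norm_num)) j
  · -- main estimate
    intro x hxΩ
    have hxball : ‖x‖ ≤ 1 := by
      have := hΩ hxΩ
      rwa [Metric.mem_closedBall, dist_zero_right] at this
    have hxb : ∀ l, |emb d x l| ≤ 1 := emb_le_one d x hxball
    have hx0 : ∀ l, d ≤ l → emb d x l = 0 := emb_zero d x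
    have hnx0 : (0:ℝ) ≤ ‖x‖^2 := by positivity
    have hnx1 : ‖x‖^2 ≤ 1 := by nlinarith [norm_nonneg x]
    have hhp := hh_pos dR N hdR
    have hDlp := Dl_pos dR N hdR
    have hH : ∀ k : ℕ, convStack s d (wF g) (bB d s J g (ukn N)) (emb d x) J k
        = relu ((∑ l ∈ Finset.range d, cZ (combP N d) ((k:ℤ) - (l:ℤ)) * emb d x l)
            - ukn N (k/d)) := by
      intro k
      rw [conv_last d s J g (ukn N) hJ1 hgdeg (emb d x) hxb hx0 k, hVJ]
    set SR : ℕ → ℝ := fun r => ∑ m ∈ Finset.range (2*N+3),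
      gam N m * relu (emb d x r - ukn N m) with hSRdef
    set tQ : ℝ := ∑ r ∈ Finset.range d, SR r with htQdef
    -- the value of the linear functional of the last conv layer
    have hG : (∑ k ∈ Finset.range (d + J*s),
        (if k < (2*N+3)*d then (1+4*dR) * gam N (k/d) else 0) *
          convStack s d (wF g) (bB d s J g (ukn N)) (emb d x) J k) = (1+4*dR) * tQ := by
      rw [← Finset.sum_subset (Finset.range_subset_range.mpr hwidth) (by
        intro k _ hk
        rw [if_neg (by simpa using Finset.mem_range.not.mp hk), zero_mul])]
      rw [sum_grid (2*N+3) d]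
      have hterm : ∀ m ∈ Finset.range (2*N+3), ∀ r ∈ Finset.range d,
          (if m*d + r < (2*N+3)*d then (1+4*dR) * gam N ((m*d+r)/d) else 0) *
            convStack s d (wF g) (bB d s J g (ukn N)) (emb d x) J (m*d+r)
          = (1+4*dR) * (gam N m * relu (emb d x r - ukn N m)) := by
        intro m hm r hr
        have hmN : m < 2*N+3 := Finset.mem_range.mp hm
        have hrd : r < d := Finset.mem_range.mp hr
        have hmr : m*d + r < (2*N+3)*d := by
          have h1 : (m+1)*d ≤ (2*N+3)*d := Nat.mul_le_mul_right d (by omega)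
          have h2 : (m+1)*d = m*d + d := by ring
          omega
        have hdiv : (m*d + r)/d = m := by
          rw [show m*d + r = d*m + r by ring, Nat.mul_add_div hd0, Nat.div_eq_of_lt hrd,
            add_zero]
        have hmod : (m*d + r) % d = r := by
          rw [show m*d + r = d*m + r by ring, Nat.mul_add_mod, Nat.mod_eq_of_lt hrd]
        rw [if_pos hmr, hH (m*d+r), hdiv, combP_lin N d hd0 (emb d x) _ hmr, hmod]
        ring
      rw [Finset.sum_congr rfl (fun m hm => Finset.sum_congr rfl (fun r hr => hterm m hm r hr))]
      rw [Finset.sum_comm, htQdef, Finset.mul_sum]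
      refine Finset.sum_congr rfl fun r _ => ?_
      simp only [hSRdef]
      exact (Finset.mul_sum _ _ _).symm
    -- bounds on tQ
    have hq : ∀ r ∈ Finset.range d, (emb d x r)^2 - 1 ≤ SR r ∧
        SR r ≤ (emb d x r)^2 - 1 + 1/(4*(N:ℝ)^2) := by
      intro r _
      have h := qgap N hN (emb d x r) (abs_le.mp (hxb r)).1 (abs_le.mp (hxb r)).2
      exact ⟨h.1, h.2⟩
    have e1 : ∑ r ∈ Finset.range d, ((emb d x r)^2 - 1) = ‖x‖^2 - dR := by
      rw [Finset.sum_sub_distrib, Finset.sum_const, Finset.card_range, norm_sq_eq d x]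
      simp [hdRdef]
    have e2 : ∑ r ∈ Finset.range d, ((emb d x r)^2 - 1 + 1/(4*(N:ℝ)^2))
        = ‖x‖^2 - dR + dR/(4*(N:ℝ)^2) := by
      rw [Finset.sum_add_distrib, e1, Finset.sum_const, Finset.card_range]
      rw [hdRdef]
      push_cast
      ring
    have hsum1 : ‖x‖^2 - dR ≤ tQ := by
      rw [← e1, htQdef]
      exact Finset.sum_le_sum fun r hr => (hq r hr).1
    have hsum2 : tQ ≤ ‖x‖^2 - dR + dR/(4*(N:ℝ)^2) := by
      rw [← e2, htQdef]
      exact Finset.sum_le_sum fun r hr => (hq r hr).2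
    have hquart : dR/(4*(N:ℝ)^2) ≤ dR := div_le_self (by linarith) (by nlinarith)
    have hquart0 : 0 ≤ dR/(4*(N:ℝ)^2) := by positivity
    have htQ1 : -dR ≤ tQ := by linarith
    have htQ2 : tQ ≤ 1 := by linarith
    -- localization
    set jj := min (⌊(tQ + dR)/(hh dR N)⌋₊) (2*N) with hjjdef
    have hjle : jj ≤ 2*N := min_le_right _ _
    have hfl0 : 0 ≤ (tQ + dR)/(hh dR N) := div_nonneg (by linarith) hhp.le
    have hloc1 : vv dR N jj ≤ tQ := by
      rw [vv]
      have h1 : (jj:ℝ) ≤ (tQ + dR)/(hh dR N) := by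
        refine le_trans ?_ (Nat.floor_le hfl0)
        exact_mod_cast min_le_left _ _
      have h2 := (le_div_iff₀ hhp).mp h1
      linarith
    have hloc2 : tQ ≤ vv dR N (jj+1) := by
      rw [vv]
      rcases le_or_gt (⌊(tQ + dR)/(hh dR N)⌋₊) (2*N) with hcase | hcase
      · have hjj2 : jj = ⌊(tQ + dR)/(hh dR N)⌋₊ := min_eq_left hcase
        have h2 : (tQ + dR)/(hh dR N) < (jj:ℝ) + 1 := by
          rw [hjj2]
          have h5 := Nat.lt_floor_add_one ((tQ + dR)/(hh dR N))
          push_cast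
          push_cast at h5
          linarith
        have h3 := (div_lt_iff₀ hhp).mp h2
        push_cast
        linarith
      · have hjj2 : jj = 2*N := min_eq_right (by omega)
        have h2 : ((2*N+1 : ℕ):ℝ) ≤ (tQ + dR)/(hh dR N) :=
          (Nat.le_floor_iff hfl0).mp (by omega)
        have h4 := (le_div_iff₀ hhp).mp h2
        have h3 : (2*(N:ℝ)+1) * hh dR N = 1 + dR := by
          rw [hh]
          field_simp
        push_cast at h4
        rw [hjj2]
        push_cast
        linarith [h3, htQ2]
    have hGloc1 : Vb dR N jj ≤ (1+4*dR)*tQ := by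
      rw [Vb]
      have := mul_le_mul_of_nonneg_left hloc1 h14.le
      linarith
    have hGloc2 : (1+4*dR)*tQ ≤ Vb dR N (jj+1) := by
      rw [Vb]
      have := mul_le_mul_of_nonneg_left hloc2 h14.le
      linarith
    rw [hG, outer_eval f dR N hdR ((1+4*dR)*tQ) jj hjle hGloc1 hGloc2]
    -- interpolation error
    set EE : ℝ := hh dR N + dR/(4*(N:ℝ)^2) with hEEdef
    have hEE0 : 0 ≤ EE := by rw [hEEdef]; positivity
    have hEEb : EE ≤ (1+4*dR)/(N:ℝ) := by
      rw [hEEdef, hh]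
      have q1 : (1+dR)/(2*(N:ℝ)+1) ≤ (1+dR)/(N:ℝ) :=
        div_le_div_of_nonneg_left (by linarith) hN0 (by linarith)
      have q2 : dR/(4*(N:ℝ)^2) ≤ dR/(N:ℝ) :=
        div_le_div_of_nonneg_left (by linarith) hN0 (by nlinarith)
      have q3 : (1+dR)/(N:ℝ) + dR/(N:ℝ) = (1+2*dR)/(N:ℝ) := by
        rw [← add_div]
        ring_nf
      have q4 : (1+2*dR)/(N:ℝ) ≤ (1+4*dR)/(N:ℝ) := by
        gcongr
        linarith
      linarith
    have hvvjj : (jj:ℝ) * hh dR N = vv dR N jj + dR := by rw [vv]; ring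
    have hvvjj1 : ((jj:ℝ)+1) * hh dR N = vv dR N (jj+1) + dR := by
      rw [vv]
      push_cast
      ring
    have hEb : ∀ a : ℝ, 0 ≤ a → a - ‖x‖^2 ≤ EE → ‖x‖^2 - a ≤ EE →
        |f (min a 1) - f (‖x‖^2)| ≤ L * ((1+4*dR)/(N:ℝ))^α := by
      intro a ha h1 h2
      have hmem : min a 1 ∈ Set.Icc (0:ℝ) 1 := ⟨le_min ha zero_le_one, min_le_right _ _⟩
      have hdist : |min a 1 - ‖x‖^2| ≤ EE := by
        rcases le_or_gt a 1 with hc | hc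
        · rw [min_eq_left hc, abs_le]
          constructor <;> linarith
        · rw [min_eq_right hc.le, abs_le]
          constructor <;> linarith
      calc |f (min a 1) - f (‖x‖^2)| ≤ L * |min a 1 - ‖x‖^2| ^ α :=
            hf _ hmem _ ⟨hnx0, hnx1⟩
        _ ≤ L * ((1+4*dR)/(N:ℝ))^α := by
            apply mul_le_mul_of_nonneg_left _ hL0
            exact Real.rpow_le_rpow (abs_nonneg _) (le_trans hdist hEEb) hα0.le
    have hA : |FF f dR N jj - f (‖x‖^2)| ≤ L * ((1+4*dR)/(N:ℝ))^α := by
      rw [FF]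
      apply hEb _ (by positivity)
      · -- jj*hh - ‖x‖² ≤ EE
        rw [hvvjj, hEEdef]
        linarith
      · rw [hvvjj, hEEdef]
        have hV := Vb_succ dR N jj
        have hvd : vv dR N (jj+1) = vv dR N jj + hh dR N := by
          rw [vv, vv]
          push_cast
          ring
        linarith
    have hB : |FF f dR N (jj+1) - f (‖x‖^2)| ≤ L * ((1+4*dR)/(N:ℝ))^α := by
      rw [FF]
      push_cast
      apply hEb _ (by positivity)
      · rw [hvvjj1, hEEdef]
        have hvd : vv dR N (jj+1) = vv dR N jj + hh dR N := by
          rw [vv, vv]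
          push_cast
          ring
        linarith
      · rw [hvvjj1, hEEdef]
        linarith
    -- convex combination
    set T : ℝ := (1+4*dR)*tQ with hTdef
    set θ : ℝ := (T - Vb dR N jj)/(Dl dR N) with hθdef
    have hθ0 : 0 ≤ θ := div_nonneg (by linarith) hDlp.le
    have hθ1 : θ ≤ 1 := by
      rw [hθdef, div_le_one hDlp]
      have := Vb_succ dR N jj
      linarith
    have hsplitθ : FF f dR N jj + sl f dR N jj * (T - Vb dR N jj) - f (‖x‖^2)
        = (1-θ)*(FF f dR N jj - f (‖x‖^2)) + θ*(FF f dR N (jj+1) - f (‖x‖^2)) := by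
      rw [hθdef, sl]
      field_simp
      ring
    rw [hsplitθ]
    have habs : |(1-θ)*(FF f dR N jj - f (‖x‖^2)) + θ*(FF f dR N (jj+1) - f (‖x‖^2))|
        ≤ L * ((1+4*dR)/(N:ℝ))^α := by
      calc |(1-θ)*(FF f dR N jj - f (‖x‖^2)) + θ*(FF f dR N (jj+1) - f (‖x‖^2))|
          ≤ |(1-θ)*(FF f dR N jj - f (‖x‖^2))| + |θ*(FF f dR N (jj+1) - f (‖x‖^2))| :=
            abs_add_le _ _
        _ = (1-θ)*|FF f dR N jj - f (‖x‖^2)| + θ*|FF f dR N (jj+1) - f (‖x‖^2)| := by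
            rw [abs_mul, abs_mul, abs_of_nonneg (by linarith : (0:ℝ) ≤ 1-θ),
              abs_of_nonneg hθ0]
        _ ≤ L * ((1+4*dR)/(N:ℝ))^α := by
            nlinarith [mul_le_mul_of_nonneg_left hA (by linarith : (0:ℝ) ≤ 1-θ),
              mul_le_mul_of_nonneg_left hB hθ0]
    refine le_trans habs ?_
    have hpow : ((1+4*dR)/(N:ℝ))^α = (1+4*dR)^α * (N:ℝ)^(-α) := by
      rw [Real.div_rpow (by linarith) hN0.le, Real.rpow_neg hN0.le, div_eq_mul_inv]
    rw [hpow]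
    have hp1 : (0:ℝ) ≤ (1+4*dR)^α := Real.rpow_nonneg (by linarith) α
    have hp2 : (0:ℝ) ≤ (N:ℝ)^(-α) := Real.rpow_nonneg hN0.le _
    nlinarith [mul_nonneg (mul_nonneg hp1 hL0) hp2]
end

section
/- Let d ∈ ℕ and q ∈ ℕ, and set n_q = binom(d−1+q, q). Then there exists a set {ξ_k}_{k=1}^{n_q} of vectors in ℝ^d with Euclidean norm 1 such that for every polynomial Q on ℝ^d of degree at most q there exist real coefficients {β_{k,ℓ} : 1 ≤ k ≤ n_q, 1 ≤ ℓ ≤ q} with Q(x) = Q(0) + Σ_{k=1}^{n_q} Σ_{ℓ=1}^{q} β_{k,ℓ} (ξ_k · x)^ℓ for all x ∈ ℝ^d. -/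
open Finset MvPolynomial

-- eval of aeval
lemma my_eval_aeval {σ τ : Type*} (f : σ → MvPolynomial τ ℝ) (x : τ → ℝ)
    (p : MvPolynomial σ ℝ) :
    eval x (aeval f p) = eval (fun i => eval x (f i)) p := by
  induction p using MvPolynomial.induction_on with
  | C a => simp
  | add p q hp hq => simp only [map_add, hp, hq]
  | mul_X p i hp => simp only [map_mul, aeval_X, eval_mul, eval_X, hp]

-- degree bound for substitution by degree ≤ 1 polynomials
lemma my_aeval_degree {σ τ : Type*} [Fintype σ] (f : σ → MvPolynomial τ ℝ)
    (h1 : ∀ i, (f i).totalDegree ≤ 1) (p : MvPolynomial σ ℝ) :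
    (aeval f p).totalDegree ≤ p.totalDegree := by
  conv_lhs => rw [p.as_sum]
  rw [map_sum]
  refine le_trans (totalDegree_finset_sum _ _) (Finset.sup_le ?_)
  intro α hα
  rw [aeval_monomial]
  refine le_trans (totalDegree_mul _ _) ?_
  have h0 : (algebraMap ℝ (MvPolynomial τ ℝ) (coeff α p)).totalDegree = 0 := by
    simpa using totalDegree_C (σ := τ) (coeff α p)
  rw [h0, zero_add]
  refine le_trans (totalDegree_finset_prod _ _) ?_
  refine le_trans ?_ (le_totalDegree hα)
  rw [Finsupp.sum]
  refine Finset.sum_le_sum ?_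
  intro i _
  calc (f i ^ α i).totalDegree ≤ α i * (f i).totalDegree := totalDegree_pow _ _
    _ ≤ α i * 1 := Nat.mul_le_mul_left _ (h1 i)
    _ = α i := Nat.mul_one _

lemma my_aeval_aeval {σ τ υ : Type*} (f : σ → MvPolynomial τ ℝ) (g : τ → MvPolynomial υ ℝ)
    (p : MvPolynomial σ ℝ) :
    aeval g (aeval f p) = aeval (fun i => aeval g (f i)) p := by
  induction p using MvPolynomial.induction_on with
  | C a => simp
  | add p q hp hq => simp only [map_add, hp, hq]
  | mul_X p i hp => simp only [map_mul, aeval_X, hp]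

/-- A polynomial of total degree at most `q` vanishing on all lattice points of the
simplex `{a : ℕ^m | ∑ a ≤ q}` is zero. -/
lemma simplex_vanish : ∀ (m q : ℕ) (P : MvPolynomial (Fin m) ℝ), P.totalDegree ≤ q →
    (∀ a : Fin m → ℕ, (∑ i, a i) ≤ q → eval (fun i => (a i : ℝ)) P = 0) → P = 0 := by
  intro m
  induction m with
  | zero =>
    intro q P _ hv
    apply MvPolynomial.funext (R := ℝ) (q := 0)
    intro x
    have h := hv (fun _ => 0) (by simp)
    have hx : x = (fun i => (((fun _ => (0:ℕ)) : Fin 0 → ℕ) i : ℝ)) := funext fun i => i.elim0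
    rw [map_zero, hx]
    exact h
  | succ m IHm =>
    intro q
    induction q with
    | zero =>
      intro P hd hv
      have h0 : P.IsHomogeneous 0 := (totalDegree_zero_iff_isHomogeneous (p := P)).mp (Nat.le_zero.mp hd)
      have hc : coeff 0 P = 0 := by
        have h := hv (fun _ => 0) (by simp)
        rw [eval_eq] at h
        rw [Finset.sum_eq_single (0 : Fin (m+1) →₀ ℕ)] at h
        · simpa using h
        · intro β hβ hβ0
          have : β.degree = 0 := by
            by_contra hne
            exact (mem_support_iff.mp hβ) (h0.coeff_eq_zero hne)
          exact absurd ((Finsupp.degree_eq_zero_iff β).mp this) hβ0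
        · intro h'
          simp [notMem_support_iff.mp h']
      ext α
      by_cases hα : α = 0
      · simpa [hα] using hc
      · rw [coeff_zero]
        refine h0.coeff_eq_zero ?_
        simpa [Finsupp.degree_eq_zero_iff] using hα
    | succ q IHq =>
      intro P hd hv
      set F := finSuccEquiv ℝ m P with hFdef
      have hc0 : F.coeff 0 = 0 := by
        by_cases h : F.coeff 0 = 0
        · exact h
        refine IHm (q+1) _ ?_ ?_
        · have h2 := totalDegree_coeff_finSuccEquiv_add_le P 0 h
          rw [← hFdef] at h2
          omega
        · intro s hs
          have hcast : (fun i => ((Fin.cons 0 s : Fin (m+1) → ℕ) i : ℝ))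
              = Fin.cons (0 : ℝ) (fun i => (s i : ℝ)) := by
            funext i
            refine Fin.cases ?_ ?_ i <;> simp
          have key := hv (Fin.cons 0 s) (by
            rw [Fin.sum_univ_succ]
            simpa using hs)
          rw [hcast, eval_eq_eval_mv_eval'] at key
          rw [← coeff_eval_eq_eval_coeff, Polynomial.coeff_zero_eq_eval_zero]
          exact key
      have hfac : F.divX * Polynomial.X = F := by
        have h1 := Polynomial.divX_mul_X_add F
        rwa [hc0, map_zero, add_zero] at h1
      set P₁ := (finSuccEquiv ℝ m).symm F.divX with hP₁def
      have hPfac : P = P₁ * X 0 := by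
        apply (finSuccEquiv ℝ m).injective
        rw [map_mul, AlgEquiv.apply_symm_apply, finSuccEquiv_X_zero, hfac]
      by_cases hP₁0 : P₁ = 0
      · rw [hPfac, hP₁0, zero_mul]
      have hdeg₁ : P₁.totalDegree ≤ q := by
        rw [totalDegree]
        apply Finset.sup_le
        intro α hα
        have hmem : α + Finsupp.single 0 1 ∈ (P₁ * X 0).support := by
          rw [support_mul_X]
          exact Finset.mem_map.mpr ⟨α, hα, rfl⟩
        have hle : (α + Finsupp.single 0 1).sum (fun _ e => e) ≤ q + 1 := by
          refine le_trans (le_totalDegree hmem) ?_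
          rw [← hPfac]; exact hd
        rw [Finsupp.sum_add_index' (fun _ => rfl) (fun _ _ _ => rfl),
          Finsupp.sum_single_index rfl] at hle
        omega
      set sh : Fin (m+1) → MvPolynomial (Fin (m+1)) ℝ :=
        fun i => if i = 0 then X 0 + C 1 else X i with hshdef
      set sh' : Fin (m+1) → MvPolynomial (Fin (m+1)) ℝ :=
        fun i => if i = 0 then X 0 - C 1 else X i with hsh'def
      have hinv : ∀ p : MvPolynomial (Fin (m+1)) ℝ, aeval sh' (aeval sh p) = p := by
        intro p
        rw [my_aeval_aeval]
        have : (fun i => aeval sh' (sh i)) = (X : Fin (m+1) → MvPolynomial (Fin (m+1)) ℝ) := by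
          funext i
          by_cases h : i = 0 <;> simp [hshdef, hsh'def, h]
        rw [this, aeval_X_left_apply]
      set P₂ := aeval sh P₁ with hP₂def
      have hdeg₂ : P₂.totalDegree ≤ q := by
        refine le_trans (my_aeval_degree sh ?_ P₁) hdeg₁
        intro i
        by_cases h : i = 0
        · simp only [hshdef, h, if_true]
          refine le_trans (totalDegree_add _ _) ?_
          simp [totalDegree_X]
        · simp [hshdef, h, totalDegree_X]
      have hv₂ : ∀ a : Fin (m+1) → ℕ, (∑ i, a i) ≤ q → eval (fun i => (a i : ℝ)) P₂ = 0 := by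
        intro a ha
        set b : Fin (m+1) → ℕ := fun i => if i = 0 then a i + 1 else a i with hbdef
        have hsb : (∑ i, b i) ≤ q + 1 := by
          have : (∑ i, b i) = (∑ i, a i) + 1 := by
            rw [Fin.sum_univ_succ, Fin.sum_univ_succ (f := fun i => a i)]
            have : ∀ j : Fin m, b j.succ = a j.succ := by
              intro j; simp [hbdef, Fin.succ_ne_zero j]
            simp only [this]
            simp [hbdef]
            ring
          omega
        have hb := hv b hsb
        rw [hPfac, eval_mul, eval_X] at hb
        have hb0 : ((b 0 : ℝ)) ≠ 0 := by
          simp [hbdef]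
          positivity
        have hP₁b : eval (fun i => (b i : ℝ)) P₁ = 0 := by
          rcases mul_eq_zero.mp hb with h | h
          · exact h
          · exact absurd h hb0
        rw [hP₂def, my_eval_aeval]
        have : (fun i => eval (fun j => (a j : ℝ)) (sh i)) = (fun i => (b i : ℝ)) := by
          funext i
          by_cases h : i = 0 <;> simp [hshdef, hbdef, h]
        rw [this, hP₁b]
      have hP₂0 : P₂ = 0 := IHq P₂ hdeg₂ hv₂
      have : P₁ = 0 := by
        rw [← hinv P₁, ← hP₂def, hP₂0, map_zero]
      rw [hPfac, this, zero_mul]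

lemma my_degree_eq_sum {d : ℕ} (α : Fin d →₀ ℕ) : α.degree = α.sum (fun _ e => e) := rfl

lemma my_decomp {d : ℕ} (α : Fin d →₀ ℕ) (i : Fin d) (hi : α i ≠ 0) :
    α = (α - Finsupp.single i 1) + Finsupp.single i 1 := by
  ext j
  rcases eq_or_ne j i with rfl | hne
  · simp only [Finsupp.add_apply, Finsupp.tsub_apply, Finsupp.single_eq_same]
    omega
  · simp [Finsupp.tsub_apply, Finsupp.single_eq_of_ne' (Ne.symm hne)]

lemma my_deg_sub {d : ℕ} (α : Fin d →₀ ℕ) (i : Fin d) (hi : α i ≠ 0) :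
    (α - Finsupp.single i 1).degree + 1 = α.degree := by
  conv_rhs => rw [my_decomp α i hi]
  rw [my_degree_eq_sum, my_degree_eq_sum,
    Finsupp.sum_add_index' (fun _ => rfl) (fun _ _ _ => rfl),
    Finsupp.sum_single_index rfl]

lemma my_prod_sub {d : ℕ} (α : Fin d →₀ ℕ) (i : Fin d) (hi : α i ≠ 0) (c : Fin d → ℝ) :
    (α - Finsupp.single i 1).prod (fun j e => c j ^ e) * c i
      = α.prod (fun j e => c j ^ e) := by
  conv_rhs => rw [my_decomp α i hi]
  rw [Finsupp.prod_add_index' (fun a => pow_zero (c a)) (fun a b₁ b₂ => pow_add (c a) b₁ b₂)]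
  congr 1
  simp

lemma my_coeff_linear_pow_succ {d : ℕ} {R : Type*} [CommSemiring R] (c : Fin d → R)
    (ℓ : ℕ) (α : Fin d →₀ ℕ) :
    coeff α ((∑ i, C (c i) * X i) ^ (ℓ + 1))
      = ∑ i, c i * (if i ∈ α.support then
          coeff (α - Finsupp.single i 1) ((∑ i, C (c i) * X i) ^ ℓ) else 0) := by
  set L : MvPolynomial (Fin d) R := ∑ i, C (c i) * X i with hL
  calc coeff α (L ^ (ℓ + 1)) = coeff α (∑ i, C (c i) * (L ^ ℓ * X i)) := by
        rw [pow_succ, hL, Finset.mul_sum]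
        congr 1
        exact Finset.sum_congr rfl fun i _ => by ring
    _ = ∑ i, c i * coeff α (L ^ ℓ * X i) := by
        rw [coeff_sum]
        exact Finset.sum_congr rfl fun i _ => coeff_C_mul α (c i) _
    _ = _ := Finset.sum_congr rfl fun i _ => by rw [coeff_mul_X']

lemma my_coeff_sum_X_pow_succ {d : ℕ} (ℓ : ℕ) (α : Fin d →₀ ℕ) :
    coeff α ((∑ i, (X i : MvPolynomial (Fin d) ℕ)) ^ (ℓ + 1))
      = ∑ i, (if i ∈ α.support then
          coeff (α - Finsupp.single i 1) ((∑ i, (X i : MvPolynomial (Fin d) ℕ)) ^ ℓ) else 0) := by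
  have hS : (∑ i, (X i : MvPolynomial (Fin d) ℕ)) = ∑ i, C ((fun _ => (1:ℕ)) i) * X i := by
    simp
  rw [hS, my_coeff_linear_pow_succ]
  simp only [one_mul, C_1, ← hS]

lemma my_N_pos {d : ℕ} : ∀ (ℓ : ℕ) (α : Fin d →₀ ℕ), α.degree = ℓ →
    0 < coeff α ((∑ i, (X i : MvPolynomial (Fin d) ℕ)) ^ ℓ) := by
  intro ℓ
  induction ℓ with
  | zero =>
    intro α hα
    rw [(Finsupp.degree_eq_zero_iff α).mp hα, pow_zero]
    simp
  | succ ℓ IH =>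
    intro α hα
    have hα0 : α ≠ 0 := by
      intro h
      rw [h, map_zero] at hα
      omega
    obtain ⟨i, hi⟩ : ∃ i, α i ≠ 0 := by
      by_contra h
      push_neg at h
      exact hα0 (Finsupp.ext h)
    rw [my_coeff_sum_X_pow_succ]
    refine Finset.sum_pos' (fun j _ => Nat.zero_le _) ⟨i, mem_univ i, ?_⟩
    rw [if_pos (Finsupp.mem_support_iff.mpr hi)]
    exact IH _ (by have := my_deg_sub α i hi; omega)

lemma my_coeffM {d : ℕ} (c : Fin d → ℝ) : ∀ (ℓ : ℕ) (α : Fin d →₀ ℕ), α.degree = ℓ →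
    coeff α ((∑ i, C (c i) * X i) ^ ℓ)
      = ((coeff α ((∑ i, (X i : MvPolynomial (Fin d) ℕ)) ^ ℓ) : ℕ) : ℝ)
          * α.prod (fun j e => c j ^ e) := by
  intro ℓ
  induction ℓ with
  | zero =>
    intro α hα
    rw [(Finsupp.degree_eq_zero_iff α).mp hα, pow_zero, pow_zero]
    rw [Finsupp.prod_zero_index]
    simp
  | succ ℓ IH =>
    intro α hα
    rw [my_coeff_linear_pow_succ, my_coeff_sum_X_pow_succ]
    push_cast
    rw [Finset.sum_mul]
    refine Finset.sum_congr rfl fun i _ => ?_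
    by_cases hi : i ∈ α.support
    · have hi' : α i ≠ 0 := Finsupp.mem_support_iff.mp hi
      rw [if_pos hi, if_pos hi, IH _ (by have := my_deg_sub α i hi'; omega)]
      rw [← my_prod_sub α i hi' c]
      push_cast
      ring
    · rw [if_neg hi, if_neg hi]
      push_cast
      ring

lemma my_homog_eval_smul {d ℓ : ℕ} (P : MvPolynomial (Fin d) ℝ) (hP : P.IsHomogeneous ℓ)
    (t : ℝ) (x : Fin d → ℝ) :
    eval (fun i => t * x i) P = t ^ ℓ * eval x P := by
  rw [eval_eq, eval_eq, Finset.mul_sum]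
  refine Finset.sum_congr rfl fun α hα => ?_
  have hdeg : α.degree = ℓ := by
    have h := hP (mem_support_iff.mp hα)
    rw [Finsupp.degree_eq_weight_one]
    exact h
  have : (∏ i ∈ α.support, (t * x i) ^ α i)
      = t ^ ℓ * ∏ i ∈ α.support, (x i) ^ α i := by
    calc ∏ i ∈ α.support, (t * x i) ^ α i
        = ∏ i ∈ α.support, (t ^ α i * (x i) ^ α i) := by
          exact Finset.prod_congr rfl fun i _ => mul_pow t (x i) (α i)
      _ = (∏ i ∈ α.support, t ^ α i) * ∏ i ∈ α.support, (x i) ^ α i :=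
          Finset.prod_mul_distrib
      _ = t ^ ℓ * ∏ i ∈ α.support, (x i) ^ α i := by
          rw [Finset.prod_pow_eq_pow_sum, ← hdeg]
          rfl
  rw [this]
  ring

lemma my_slice_vanish (m q ℓ : ℕ) (hq : 1 ≤ q) (hℓq : ℓ ≤ q)
    (P : MvPolynomial (Fin (m+1)) ℝ) (hP : P.IsHomogeneous ℓ)
    (hv : ∀ a : Fin (m+1) → ℕ, (∑ i, a i) = q → eval (fun i => (a i : ℝ)) P = 0) :
    P = 0 := by
  set f : Fin (m+1) → MvPolynomial (Fin m) ℝ :=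
    Fin.cons (C (q:ℝ) - ∑ j, X j) X with hf
  have hf1 : ∀ i, (f i).totalDegree ≤ 1 := by
    intro i
    refine Fin.cases ?_ ?_ i
    · rw [hf, Fin.cons_zero]
      refine le_trans (totalDegree_sub _ _) ?_
      rw [totalDegree_C]
      refine max_le (Nat.zero_le _) ?_
      refine le_trans (totalDegree_finset_sum _ _) ?_
      exact Finset.sup_le fun j _ => le_of_eq (totalDegree_X j)
    · intro j
      rw [hf, Fin.cons_succ]
      exact le_of_eq (totalDegree_X j)
  set g := aeval f P with hg
  have hgdeg : g.totalDegree ≤ q :=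
    le_trans (my_aeval_degree f hf1 P) (le_trans hP.totalDegree_le hℓq)
  have hgv : ∀ a : Fin m → ℕ, (∑ i, a i) ≤ q → eval (fun i => (a i : ℝ)) g = 0 := by
    intro a ha
    rw [hg, my_eval_aeval]
    set b : Fin (m+1) → ℕ := Fin.cons (q - ∑ i, a i) a with hb
    have hfb : (fun i => eval (fun j => (a j : ℝ)) (f i)) = fun i => (b i : ℝ) := by
      funext i
      refine Fin.cases ?_ ?_ i
      · rw [hf, hb]
        simp only [Fin.cons_zero]
        rw [map_sub, eval_C, map_sum]
        simp only [eval_X]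
        rw [Nat.cast_sub ha]
        simp
      · intro j
        rw [hf, hb]
        simp
    rw [hfb]
    refine hv b ?_
    rw [hb, Fin.sum_univ_succ]
    simp only [Fin.cons_zero, Fin.cons_succ]
    omega
  have hg0 : g = 0 := simplex_vanish m q g hgdeg hgv
  have hhyp : ∀ x : Fin (m+1) → ℝ, (∑ i, x i) = q → eval x P = 0 := by
    intro x hx
    have h1 : eval (Fin.tail x) g = 0 := by rw [hg0, map_zero]
    rw [hg, my_eval_aeval] at h1
    have hfx : (fun i => eval (Fin.tail x) (f i)) = x := by
      funext i
      refine Fin.cases ?_ ?_ i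
      · rw [hf]
        simp only [Fin.cons_zero]
        rw [map_sub, eval_C, map_sum]
        simp only [eval_X]
        have : (∑ j : Fin m, Fin.tail x j) = (∑ i, x i) - x 0 := by
          rw [Fin.sum_univ_succ]
          simp [Fin.tail]
        rw [this, hx]
        ring
      · intro j
        rw [hf]
        simp [Fin.tail]
    rw [hfx] at h1
    exact h1
  have hall : ∀ x : Fin (m+1) → ℝ, eval x P * (∑ i, x i) = 0 := by
    intro x
    rcases eq_or_ne (∑ i, x i) 0 with h0 | h0
    · rw [h0, mul_zero]
    · have hq0 : ((q:ℝ)) ≠ 0 := Nat.cast_ne_zero.mpr (by omega)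
      have ht : eval (fun i => ((q:ℝ)/(∑ i, x i)) * x i) P = 0 := by
        refine hhyp _ ?_
        rw [← Finset.mul_sum]
        field_simp
      rw [my_homog_eval_smul P hP] at ht
      have hne : ((q:ℝ)/(∑ i, x i)) ^ ℓ ≠ 0 := pow_ne_zero _ (div_ne_zero hq0 h0)
      rcases mul_eq_zero.mp ht with h | h
      · exact absurd h hne
      · rw [h, zero_mul]
  have hmul : P * (∑ i, X i) = 0 := by
    apply MvPolynomial.funext (R := ℝ)
    intro x
    rw [map_zero, eval_mul, map_sum]
    simp only [eval_X]
    exact hall x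
  have hX : (∑ i : Fin (m+1), (X i : MvPolynomial (Fin (m+1)) ℝ)) ≠ 0 := by
    intro h
    have h2 := congrArg (eval (fun _ => (1:ℝ))) h
    rw [map_sum, map_zero] at h2
    simp only [eval_X] at h2
    rw [Finset.sum_const, card_univ, Fintype.card_fin] at h2
    have h3 : (0:ℝ) < ((m+1 : ℕ) : ℝ) := by positivity
    rw [nsmul_eq_mul, mul_one] at h2
    linarith
  exact (mul_eq_zero.mp hmul).resolve_right hX

set_option synthInstance.maxHeartbeats 1000000 in
set_option maxHeartbeats 1000000 in
lemma my_span (d q ℓ : ℕ) (hd : 1 ≤ d) (hq : 1 ≤ q) (hℓq : ℓ ≤ q)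
    (p : MvPolynomial (Fin d) ℝ) (hp : p.IsHomogeneous ℓ) :
    p ∈ Submodule.span ℝ (Set.range (fun a : {a : Fin d → ℕ // ∑ i, a i = q} =>
      (∑ i, C ((a.1 i : ℝ)) * X i) ^ ℓ)) := by
  by_contra hps
  obtain ⟨f, hfp, hfmap⟩ := Submodule.exists_dual_map_eq_bot_of_notMem hps inferInstance
  have hfS : ∀ v ∈ Submodule.span ℝ (Set.range (fun a : {a : Fin d → ℕ // ∑ i, a i = q} =>
      (∑ i, C ((a.1 i : ℝ)) * X i) ^ ℓ)), f v = 0 := by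
    intro v hv
    have h1 : f v ∈ Submodule.map f (Submodule.span ℝ _) := Submodule.mem_map_of_mem hv
    rw [hfmap] at h1
    simpa using h1
  have hgen : ∀ a : {a : Fin d → ℕ // ∑ i, a i = q},
      f ((∑ i, C ((a.1 i : ℝ)) * X i) ^ ℓ) = 0 :=
    fun a => hfS _ (Submodule.subset_span ⟨a, rfl⟩)
  have hmon : ∀ (α : Fin d →₀ ℕ) (c : ℝ), f (monomial α c) = c * f (monomial α 1) := by
    intro α c
    have h : monomial α c = c • monomial α (1:ℝ) := by
      rw [smul_monomial, smul_eq_mul, mul_one]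
    rw [h, map_smul, smul_eq_mul]
  set D := ((∑ i, (X i : MvPolynomial (Fin d) ℕ)) ^ ℓ).support with hD
  have hDmem : ∀ α, α ∈ D ↔ α.degree = ℓ := by
    intro α
    constructor
    · intro h
      have h1 : (∑ i, (X i : MvPolynomial (Fin d) ℕ)).IsHomogeneous 1 :=
        IsHomogeneous.sum univ _ 1 (fun i _ => isHomogeneous_X ℕ i)
      have hhom : ((∑ i, (X i : MvPolynomial (Fin d) ℕ)) ^ ℓ).IsHomogeneous ℓ := by
        simpa using h1.pow ℓ
      have h2 := hhom (mem_support_iff.mp h)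
      rw [Finsupp.degree_eq_weight_one]
      exact h2
    · intro h
      exact mem_support_iff.mpr (my_N_pos ℓ α h).ne'
  set G : MvPolynomial (Fin d) ℝ := ∑ α ∈ D, monomial α
    (((coeff α ((∑ i, (X i : MvPolynomial (Fin d) ℕ)) ^ ℓ) : ℕ) : ℝ)
      * f (monomial α 1)) with hG
  have hGhom : G.IsHomogeneous ℓ :=
    IsHomogeneous.sum _ _ _ (fun α hα => isHomogeneous_monomial _ ((hDmem α).mp hα))
  have key : ∀ a : Fin d → ℕ, (∑ i, a i) = q → eval (fun i => (a i : ℝ)) G = 0 := by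
    intro a ha
    have hevalG : eval (fun i => (a i : ℝ)) G
        = ∑ α ∈ D, ((coeff α ((∑ i, (X i : MvPolynomial (Fin d) ℕ)) ^ ℓ) : ℕ) : ℝ)
            * f (monomial α 1) * α.prod (fun j e => ((a j : ℝ)) ^ e) := by
      rw [hG, map_sum]
      exact Finset.sum_congr rfl fun α _ => eval_monomial
    have h2 : f ((∑ i, C ((a i : ℝ)) * X i) ^ ℓ) = 0 := hgen ⟨a, ha⟩
    have hLhom : ((∑ i, C ((a i : ℝ)) * X i)).IsHomogeneous 1 :=
      IsHomogeneous.sum univ _ 1 (fun i _ => isHomogeneous_C_mul_X _ i)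
    have hLp : ((∑ i, C ((a i : ℝ)) * X i) ^ ℓ).IsHomogeneous ℓ := by
      simpa using hLhom.pow ℓ
    have hsupp : ((∑ i, C ((a i : ℝ)) * X i) ^ ℓ).support ⊆ D := by
      intro α hα
      rw [hDmem]
      have h3 := hLp (mem_support_iff.mp hα)
      rw [Finsupp.degree_eq_weight_one]
      exact h3
    have hexp : (∑ i, C ((a i : ℝ)) * X i) ^ ℓ
        = ∑ α ∈ D, monomial α (coeff α ((∑ i, C ((a i : ℝ)) * X i) ^ ℓ)) := by
      conv_lhs => rw [as_sum ((∑ i, C ((a i : ℝ)) * X i) ^ ℓ)]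
      refine Finset.sum_subset hsupp ?_
      intro α _ hα
      rw [notMem_support_iff.mp hα, monomial_zero]
    rw [hexp, map_sum] at h2
    rw [hevalG, ← h2]
    refine Finset.sum_congr rfl fun α hα => ?_
    rw [my_coeffM (fun i => (a i : ℝ)) ℓ α ((hDmem α).mp hα)]
    conv_rhs => rw [hmon]
    ring
  obtain ⟨m, rfl⟩ : ∃ m, d = m + 1 := ⟨d - 1, by omega⟩
  have hG0 : G = 0 := my_slice_vanish m q ℓ hq hℓq G hGhom key
  have hfmon : ∀ α : Fin (m+1) →₀ ℕ, α.degree = ℓ → f (monomial α 1) = 0 := by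
    intro α hα
    have hcoeff := congrArg (coeff α) hG0
    rw [hG, coeff_sum, coeff_zero] at hcoeff
    rw [Finset.sum_eq_single α] at hcoeff
    · rw [coeff_monomial, if_pos rfl] at hcoeff
      have hN : ((coeff α ((∑ i, (X i : MvPolynomial (Fin (m+1)) ℕ)) ^ ℓ) : ℕ) : ℝ) ≠ 0 :=
        Nat.cast_ne_zero.mpr (my_N_pos ℓ α hα).ne'
      exact (mul_eq_zero.mp hcoeff).resolve_left hN
    · intro β _ hβα
      rw [coeff_monomial, if_neg hβα]
    · intro hα'
      exact absurd ((hDmem α).mpr hα) hα'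
  apply hfp
  conv_lhs => rw [as_sum p]
  rw [map_sum]
  refine Finset.sum_eq_zero fun α hα => ?_
  rw [hmon]
  have hdeg : α.degree = ℓ := by
    have h3 := hp (mem_support_iff.mp hα)
    rw [Finsupp.degree_eq_weight_one]
    exact h3
  rw [hfmon α hdeg, mul_zero]

/-- Lemma 4: there exist unit vectors `{ξ_k}_{k=1}^{n_q}`, `n_q = binom(d-1+q,q)`, such that
every polynomial `Q` of degree at most `q` on `ℝ^d` can be written as
`Q(x) = Q(0) + Σ_{k=1}^{n_q} Σ_{ℓ=1}^{q} β_{k,ℓ} (ξ_k·x)^ℓ`. -/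
theorem ridge_polynomial_identity (d q : ℕ) (hd : 1 ≤ d) (hq : 1 ≤ q) :
    ∃ ξ : Fin (Nat.choose (d - 1 + q) q) → EuclideanSpace ℝ (Fin d),
      (∀ k, ‖ξ k‖ = 1) ∧
      ∀ Q : MvPolynomial (Fin d) ℝ, Q.totalDegree ≤ q →
        ∃ β : Fin (Nat.choose (d - 1 + q) q) → Fin q → ℝ,
          ∀ x : EuclideanSpace ℝ (Fin d),
            MvPolynomial.eval (fun i => x i) Q =
              MvPolynomial.eval (fun _ => (0 : ℝ)) Q +
                ∑ k, ∑ ℓ, β k ℓ * (∑ i, ξ k i * x i) ^ ((ℓ : ℕ) + 1) := by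
  classical
  set n := Nat.choose (d - 1 + q) q with hn
  set A := {a : Fin d → ℕ // ∑ i, a i = q} with hA
  have eSym : Sym (Fin d) q ≃ A := Sym.equivNatSumOfFintype (Fin d) q
  letI : Fintype A := Fintype.ofEquiv _ eSym
  have hcard : Fintype.card A = n := by
    rw [← Fintype.card_congr eSym, Sym.card_sym_eq_multichoose, Fintype.card_fin,
      Nat.multichoose_eq, hn]
    congr 1
    omega
  set e0 : Fin n ≃ A := (Fintype.equivFinOfCardEq hcard).symm with he0
  set v : Fin n → EuclideanSpace ℝ (Fin d) := fun k => WithLp.toLp 2 (fun i => ((e0 k).1 i : ℝ)) with hv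
  have hvne : ∀ k, v k ≠ 0 := by
    intro k h
    have hzero : ∀ i, (e0 k).1 i = 0 := by
      intro i
      have := congrArg (fun w : EuclideanSpace ℝ (Fin d) => w i) h
      simpa [hv] using this
    have hsum := (e0 k).2
    simp [hzero] at hsum
    omega
  set ξ : Fin n → EuclideanSpace ℝ (Fin d) := fun k => ‖v k‖⁻¹ • v k with hξ
  have hξnorm : ∀ k, ‖ξ k‖ = 1 := fun k => norm_smul_inv_norm (hvne k)
  have hξi : ∀ k i, ξ k i = ‖v k‖⁻¹ * ((e0 k).1 i : ℝ) := by
    intro k i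
    rw [hξ]
    simp [hv, PiLp.smul_apply]
  refine ⟨ξ, hξnorm, ?_⟩
  intro Q hQ
  set c₀ := eval (fun _ => (0:ℝ)) Q with hc₀
  set g : Fin n × Fin q → MvPolynomial (Fin d) ℝ :=
    fun kl => (∑ i, C (ξ kl.1 i) * X i) ^ ((kl.2 : ℕ) + 1) with hgdef
  set S := Submodule.span ℝ (Set.range g) with hS
  have hLa : ∀ (j : ℕ), 1 ≤ j → j ≤ q → ∀ a : A,
      ((∑ i, C ((a.1 i : ℝ)) * X i) ^ j) ∈ S := by
    intro j hj1 hjq a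
    set k := e0.symm a with hk
    have hak : (e0 k).1 = a.1 := by rw [hk, Equiv.apply_symm_apply]
    have hrne : ‖v k‖ ≠ 0 := norm_ne_zero_iff.mpr (hvne k)
    have hLeq : (∑ i, C ((a.1 i : ℝ)) * X i)
        = ‖v k‖ • (∑ i, C (ξ k i) * X i) := by
      rw [Finset.smul_sum]
      refine Finset.sum_congr rfl fun i _ => ?_
      rw [smul_eq_C_mul, ← mul_assoc, ← C_mul, hξi, hak]
      congr 2
      field_simp
    have hgmem : (∑ i, C (ξ k i) * X i) ^ j ∈ S := by
      have : (∑ i, C (ξ k i) * X i) ^ j = g (k, ⟨j - 1, by omega⟩) := by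
        rw [hgdef]
        congr 1
        simp
        omega
      rw [this]
      exact Submodule.subset_span (Set.mem_range_self _)
    rw [hLeq, smul_pow]
    exact Submodule.smul_mem _ _ hgmem
  have hQS : Q - C c₀ ∈ S := by
    have hsum := sum_homogeneousComponent Q
    have h0mem : (0:ℕ) ∈ Finset.range (Q.totalDegree + 1) := by
      simp
    have hsplit : Q - C c₀
        = ∑ j ∈ (Finset.range (Q.totalDegree + 1)).erase 0, homogeneousComponent j Q := by
      have h2 : (∑ j ∈ (Finset.range (Q.totalDegree + 1)).erase 0, homogeneousComponent j Q)
          + homogeneousComponent 0 Q = Q := by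
        have h4 := Finset.sum_erase_add (Finset.range (Q.totalDegree + 1))
          (fun j => homogeneousComponent j Q) h0mem
        rw [hsum] at h4
        simpa using h4
      have h3 : homogeneousComponent 0 Q = C c₀ := by
        rw [homogeneousComponent_zero, hc₀, eval_zero', constantCoeff_eq]
      rw [← h3, eq_comm, eq_sub_iff_add_eq]
      exact h2
    rw [hsplit]
    refine Submodule.sum_mem _ ?_
    intro j hj
    have hj0 : j ≠ 0 := Finset.ne_of_mem_erase hj
    have hjle : j ≤ q := by
      have := Finset.mem_range.mp (Finset.mem_of_mem_erase hj)
      omega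
    have hmem := my_span d q j hd hq hjle (homogeneousComponent j Q)
      (homogeneousComponent_isHomogeneous j Q)
    refine Submodule.span_le.mpr ?_ hmem
    rintro - ⟨a, rfl⟩
    exact hLa j (by omega) hjle a
  obtain ⟨c, hc⟩ := (Submodule.mem_span_range_iff_exists_fun ℝ).mp hQS
  refine ⟨fun k ℓ => c (k, ℓ), ?_⟩
  intro x
  have hQeq : Q = C c₀ + ∑ kl : Fin n × Fin q, c kl • g kl := by
    rw [hc]
    ring
  have := congrArg (eval (fun i => x i)) hQeq
  rw [this, map_add, eval_C, map_sum]
  congr 1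
  rw [Fintype.sum_prod_type]
  refine Finset.sum_congr rfl fun k _ => Finset.sum_congr rfl fun ℓ _ => ?_
  rw [smul_eq_C_mul, eval_mul, eval_C, hgdef]
  simp only [map_pow, map_sum, eval_mul, eval_C, eval_X]
end

section
/- Let s ≥ 2, m ∈ ℕ, N ∈ ℕ, and define the sequence W^{[1]} supported in {0,…,(2N+3)m} by W^{[1]}_i = 1 if i ∈ {km : k = 0,1,…,2N+3} and W^{[1]}_i = 0 otherwise. Then there exist p ≤ ⌈(2N+3)m/(s−1)⌉ filters w^(1),…,w^(p), each supported in {0,…,s} and each satisfying ‖w^(j)‖_∞ ≤ s^{s/2} 2^s, such that W^{[1]} = w^(p) * ⋯ * w^(2) * w^(1). -/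
open Finset

open scoped Classical

/-- Convolution of finitely supported real sequences on ℤ: `(u*v)_i = Σ_k u_{i-k} v_k`. -/
noncomputable def seqConv (u v : ℤ → ℝ) : ℤ → ℝ := fun i => ∑ᶠ k : ℤ, u (i - k) * v k

/-- Iterated convolution of a list of sequences (empty list gives the delta sequence). -/
noncomputable def seqConvList : List (ℤ → ℝ) → ℤ → ℝ
  | [] => fun i => if i = 0 then 1 else 0
  | u :: rest => seqConv u (seqConvList rest)

/-- A sequence is supported in `{0, …, s}`. -/
def SeqSupp (s : ℕ) (w : ℤ → ℝ) : Prop :=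
  ∀ k : ℤ, (k < 0 ∨ (s : ℤ) < k) → w k = 0

/-- The sequence `W^{[1]}`, equal to `1` at the multiples `km`, `0 ≤ k ≤ 2N+3`, of `m`,
and `0` elsewhere. -/
noncomputable def Wone (m N : ℕ) : ℤ → ℝ := fun i =>
  if ∃ k : ℕ, k ≤ 2 * N + 3 ∧ i = (k : ℤ) * (m : ℤ) then 1 else 0

open Polynomial in
section

noncomputable def toSeq (p : ℝ[X]) : ℤ → ℝ := fun i => if 0 ≤ i then p.coeff i.toNat else 0

lemma toSeq_mul (p q : ℝ[X]) : toSeq (p * q) = seqConv (toSeq p) (toSeq q) := by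
  funext i
  rcases lt_or_ge i 0 with hi | hi
  · have h0 : ∀ k : ℤ, toSeq p (i - k) * toSeq q k = 0 := by
      intro k
      rcases lt_or_ge k 0 with hk | hk
      · simp [toSeq, not_le.2 hk]
      · have : i - k < 0 := by omega
        simp [toSeq, not_le.2 this, not_le.2 (show i < k by omega)]
    simp only [seqConv]
    rw [finsum_congr h0, finsum_zero]
    simp [toSeq, not_le.2 hi]
  · set n := i.toNat with hn
    have hin : i = (n : ℤ) := by omega
    have hsupp : (Function.support fun k : ℤ => toSeq p (i - k) * toSeq q k) ⊆
        ↑(Finset.image (Nat.cast : ℕ → ℤ) (Finset.range (n + 1))) := by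
      intro k hk
      simp only [Function.mem_support] at hk
      have hk0 : 0 ≤ k := by
        by_contra h
        exact hk (by simp [toSeq, not_le.2 (not_le.1 h)])
      have hki : k ≤ i := by
        by_contra h
        have : i - k < 0 := by omega
        exact hk (by simp [toSeq, not_le.2 this, not_le.2 (show i < k by omega)])
      simp only [Finset.coe_image, Set.mem_image, Finset.mem_coe, Finset.mem_range]
      refine ⟨k.toNat, ?_, Int.toNat_of_nonneg hk0⟩
      omega
    have := finsum_eq_finset_sum_of_support_subset _ hsupp
    simp only [seqConv]
    rw [this, Finset.sum_image (by intro a _ b _ h; exact_mod_cast h)]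
    have : ∀ j ∈ Finset.range (n + 1),
        toSeq p (i - (j : ℤ)) * toSeq q (j : ℤ) = p.coeff (n - j) * q.coeff j := by
      intro j hj
      simp only [Finset.mem_range] at hj
      have h1 : (0:ℤ) ≤ i - j := by omega
      have h2 : (i - (j:ℤ)).toNat = n - j := by omega
      have h3 : ((j:ℤ)).toNat = j := by omega
      simp [toSeq, h1, h2, h3, not_lt.2 (show (j:ℤ) ≤ i by omega)]
    rw [Finset.sum_congr rfl this]
    simp only [toSeq, if_pos hi, ← hn]
    rw [Polynomial.coeff_mul, Finset.Nat.sum_antidiagonal_eq_sum_range_succ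
      (fun a b => p.coeff a * q.coeff b) n]
    rw [← Finset.sum_range_reflect (fun x => p.coeff (n - x) * q.coeff x) (n + 1)]
    apply Finset.sum_congr rfl
    intro j hj
    simp only [Finset.mem_range] at hj
    have e2 : n + 1 - 1 - j = n - j := by omega
    have e1 : n - (n - j) = j := by omega
    simp only [e2, e1]

lemma toSeq_one : toSeq 1 = fun i : ℤ => if i = 0 then 1 else 0 := by
  funext i
  simp only [toSeq, Polynomial.coeff_one]
  rcases lt_trichotomy i 0 with h | h | h
  · simp [not_le.2 h, h.ne]
  · simp [h]
  · have : i.toNat ≠ 0 := by omega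
    simp [h.le, this, h.ne']

lemma toSeq_list_prod (B : List ℝ[X]) : toSeq B.prod = seqConvList (B.map toSeq) := by
  induction B with
  | nil => simpa [seqConvList] using toSeq_one
  | cons b t ih => simp [seqConvList, toSeq_mul, ih]

def Atom (A : ℝ[X]) : Prop :=
  (∃ c : ℝ, |c| ≤ 1 ∧ A = X + C c) ∨ (∃ a : ℝ, |a| ≤ 2 ∧ A = X ^ 2 + C a * X + 1)

lemma quad_coeff (a : ℝ) (n : ℕ) : (X ^ 2 + C a * X + 1 : ℝ[X]).coeff n =
    if n = 0 then 1 else if n = 1 then a else if n = 2 then 1 else 0 := by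
  rcases n with _ | _ | _ | n <;>
    simp [coeff_add, coeff_X_pow, coeff_C, coeff_C_mul, coeff_X, coeff_one]

lemma quad_deg (a : ℝ) : (X ^ 2 + C a * X + 1 : ℝ[X]).natDegree = 2 := by
  compute_degree!

lemma quad_monic (a : ℝ) : (X ^ 2 + C a * X + 1 : ℝ[X]).Monic := by
  rw [add_assoc]
  apply monic_X_pow_add
  have : (C a * X + 1 : ℝ[X]) = C a * X + C 1 := by simp
  rw [this]
  exact lt_of_le_of_lt degree_linear_le (by norm_num)

lemma Atom.monic {A : ℝ[X]} (h : Atom A) : A.Monic := by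
  rcases h with ⟨c, _, h⟩ | ⟨a, _, h⟩ <;> subst h
  · exact monic_X_add_C c
  · exact quad_monic a

lemma Atom.deg {A : ℝ[X]} (h : Atom A) : 1 ≤ A.natDegree ∧ A.natDegree ≤ 2 := by
  rcases h with ⟨c, _, h⟩ | ⟨a, _, h⟩ <;> subst h
  · simp [natDegree_X_add_C]
  · simp [quad_deg]

def Dominates (p P : ℝ[X]) : Prop := ∀ n, |p.coeff n| ≤ P.coeff n

lemma Dominates.mul {p P q Q : ℝ[X]} (hp : Dominates p P) (hq : Dominates q Q) :
    Dominates (p * q) (P * Q) := by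
  intro n
  rw [coeff_mul, coeff_mul]
  refine (Finset.abs_sum_le_sum_abs _ _).trans (Finset.sum_le_sum ?_)
  intro x _
  rw [abs_mul]
  exact mul_le_mul (hp _) (hq _) (abs_nonneg _) ((abs_nonneg _).trans (hp _))

lemma coeff_le_eval_one {P : ℝ[X]} (h : ∀ n, 0 ≤ P.coeff n) (n : ℕ) :
    P.coeff n ≤ P.eval 1 := by
  have he : P.eval 1 = ∑ i ∈ P.support, P.coeff i := by
    rw [eval_eq_sum, Polynomial.sum]
    simp
  rw [he]
  by_cases hn : n ∈ P.support
  · exact Finset.single_le_sum (fun i _ => h i) hn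
  · rw [Polynomial.notMem_support_iff.1 hn]
    exact Finset.sum_nonneg fun i _ => h i

lemma atom_dom {A : ℝ[X]} (h : Atom A) :
    ∃ P : ℝ[X], Dominates A P ∧ P.eval 1 ≤ 2 ^ A.natDegree := by
  rcases h with ⟨c, hc, h⟩ | ⟨a, ha, h⟩ <;> subst h
  · refine ⟨X + C 1, fun n => ?_, by simp [natDegree_X_add_C]; norm_num⟩
    rcases n with _ | _ | n <;>
      simp_all [coeff_X, coeff_C, coeff_add, coeff_one]
  · refine ⟨X ^ 2 + C |a| * X + 1, fun n => ?_, ?_⟩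
    · rw [quad_coeff, quad_coeff]
      split_ifs <;> simp [abs_abs, le_refl] <;> norm_num
    · rw [quad_deg]
      simp only [eval_add, eval_mul, eval_pow, eval_X, eval_C]
      norm_num
      linarith

lemma list_dom (L : List ℝ[X]) (hL : ∀ A ∈ L, Atom A) :
    ∃ P : ℝ[X], Dominates L.prod P ∧ P.eval 1 ≤ 2 ^ ((L.map natDegree).sum) := by
  induction L with
  | nil =>
    refine ⟨1, fun n => ?_, by simp⟩
    rcases n with _ | n <;> simp [coeff_one]
  | cons A t ih =>
    obtain ⟨P, hP, hP1⟩ := atom_dom (hL A (by simp))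
    obtain ⟨Q, hQ, hQ1⟩ := ih (fun B hB => hL B (by simp [hB]))
    refine ⟨P * Q, hP.mul hQ, ?_⟩
    rw [eval_mul, List.map_cons, List.sum_cons, pow_add]
    have h0P : 0 ≤ P.eval 1 := le_trans (abs_nonneg _) ((hP 0).trans (coeff_le_eval_one (fun n => le_trans (abs_nonneg _) (hP n)) 0))
    have h0Q : (0:ℝ) ≤ 2 ^ ((t.map natDegree).sum) := by positivity
    exact mul_le_mul hP1 hQ1 (le_trans (abs_nonneg _) ((hQ 0).trans (coeff_le_eval_one (fun n => le_trans (abs_nonneg _) (hQ n)) 0))) (by positivity)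

lemma list_coeff_bound (L : List ℝ[X]) (hL : ∀ A ∈ L, Atom A) (n : ℕ) :
    |L.prod.coeff n| ≤ 2 ^ ((L.map natDegree).sum) := by
  obtain ⟨P, hP, hP1⟩ := list_dom L hL
  exact (hP n).trans ((coeff_le_eval_one (fun k => le_trans (abs_nonneg _) (hP k)) n).trans hP1)

lemma pairing : ∀ c : ℕ, ∀ T : Finset ℂ, T.card = c →
    (∀ z ∈ T, (starRingEnd ℂ) z ∈ T) → (∀ z ∈ T, ‖z‖ = 1) →
    ∃ L : List ℝ[X], (∀ A ∈ L, Atom A) ∧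
      (L.prod.map (algebraMap ℝ ℂ)) = ∏ z ∈ T, (X - C z) ∧
      (L.map natDegree).sum = T.card := by
  intro c
  induction c using Nat.strong_induction_on with
  | _ c ih =>
    intro T hcard hconj habs
    rcases Finset.eq_empty_or_nonempty T with rfl | ⟨z, hz⟩
    · exact ⟨[], by simp, by simp, by simp⟩
    have hc1 : 1 ≤ c := hcard ▸ Finset.card_pos.2 ⟨z, hz⟩
    by_cases him : z.im = 0
    · -- real root, z = ±1
      have h1 : z = (z.re : ℂ) := Complex.ext rfl (by simp [him])
      have hre : |z.re| = 1 := by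
        have := habs z hz
        rw [h1] at this
        simpa using this
      obtain ⟨L, hL, hLprod, hLdeg⟩ := ih (c - 1) (by omega) (T.erase z)
        (by rw [Finset.card_erase_of_mem hz, hcard])
        (by
          intro w hw
          rw [Finset.mem_erase] at hw ⊢
          refine ⟨fun h => hw.1 ?_, hconj w hw.2⟩
          have h2 : w = (starRingEnd ℂ) ((starRingEnd ℂ) w) := by simp
          rw [h2, h]
          exact (Complex.conj_eq_iff_im.2 him))
        (fun w hw => habs w (Finset.mem_of_mem_erase hw))
      refine ⟨(X + C (-z.re)) :: L, ?_, ?_, ?_⟩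
      · intro A hA
        rcases List.mem_cons.1 hA with rfl | hA
        · exact Or.inl ⟨-z.re, by rw [abs_neg, hre], rfl⟩
        · exact hL A hA
      · rw [List.prod_cons, Polynomial.map_mul, hLprod,
          ← Finset.mul_prod_erase T _ hz]
        congr 1
        rw [Polynomial.map_add, Polynomial.map_X, map_C]
        have e1 : ((algebraMap ℝ ℂ) (-z.re)) = -z := by
          simp only [map_neg, Complex.coe_algebraMap]
          rw [← h1]
        rw [e1, map_neg]
        ring
      · rw [List.map_cons, List.sum_cons, hLdeg, Finset.card_erase_of_mem hz,
          natDegree_X_add_C, hcard]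
        omega
    · -- complex pair
      set w := (starRingEnd ℂ) z with hw
      have hwT : w ∈ T := hconj z hz
      have hwz : w ≠ z := fun h => him (Complex.conj_eq_iff_im.1 h)
      have hc2 : 2 ≤ c := by
        rw [← hcard]
        exact Finset.one_lt_card.2 ⟨z, hz, w, hwT, hwz.symm⟩
      have hns : Complex.normSq z = 1 := by
        rw [Complex.normSq_eq_norm_sq, habs z hz]
        norm_num
      have hzw : z * w = 1 := by
        rw [hw, Complex.mul_conj, hns, Complex.ofReal_one]
      have hsum : z + w = ((2 * z.re : ℝ) : ℂ) := by
        rw [hw, Complex.add_conj]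
      have hre2 : |(-(2 * z.re))| ≤ 2 := by
        have h3 : |z.re| ≤ ‖z‖ := Complex.abs_re_le_norm z
        rw [habs z hz] at h3
        rw [abs_neg, abs_mul, abs_two]
        nlinarith [abs_nonneg z.re]
      have hwzmem : w ∈ T.erase z := Finset.mem_erase.2 ⟨hwz, hwT⟩
      obtain ⟨L, hL, hLprod, hLdeg⟩ := ih (c - 2) (by omega) ((T.erase z).erase w)
        (by
          rw [Finset.card_erase_of_mem hwzmem, Finset.card_erase_of_mem hz, hcard]
          omega)
        (by
          intro u hu
          simp only [Finset.mem_erase] at hu ⊢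
          have h2 : u = (starRingEnd ℂ) ((starRingEnd ℂ) u) := by simp
          refine ⟨fun h => hu.2.1 ?_, fun h => hu.1 ?_, hconj u hu.2.2⟩
          · rw [h2, h]
            simp [hw]
          · rw [h2, h])
        (fun u hu => habs u (Finset.mem_of_mem_erase (Finset.mem_of_mem_erase hu)))
      refine ⟨(X ^ 2 + C (-(2 * z.re)) * X + 1) :: L, ?_, ?_, ?_⟩
      · intro A hA
        rcases List.mem_cons.1 hA with rfl | hA
        · exact Or.inr ⟨-(2 * z.re), hre2, rfl⟩
        · exact hL A hA
      · rw [List.prod_cons, Polynomial.map_mul, hLprod,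
          ← Finset.mul_prod_erase T _ hz,
          ← Finset.mul_prod_erase (T.erase z) _ hwzmem,
          ← mul_assoc]
        congr 1
        simp only [Polynomial.map_add, Polynomial.map_mul, Polynomial.map_pow,
          Polynomial.map_X, map_C, Polynomial.map_one]
        have e1 : ((algebraMap ℝ ℂ) (-(2 * z.re))) = -(z + w) := by
          rw [hsum]
          simp [Complex.coe_algebraMap]
        have e2 : (1 : ℂ[X]) = C (z * w) := by rw [hzw]; simp
        rw [e1, e2]
        have key : (X - C z) * (X - C w) = X ^ 2 + C (-(z + w)) * X + C (z * w) := by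
          simp only [map_neg, map_add, map_mul]
          ring
        rw [key]
      · rw [List.map_cons, List.sum_cons, hLdeg,
          Finset.card_erase_of_mem hwzmem, Finset.card_erase_of_mem hz, hcard]
        have hdeg : (X ^ 2 + C (-(2 * z.re)) * X + 1 : ℝ[X]).natDegree = 2 := by
          compute_degree!
        rw [hdeg]
        omega

lemma atom_prod_monic (L : List ℝ[X]) (hL : ∀ A ∈ L, Atom A) : L.prod.Monic := by
  induction L with
  | nil => simpa using monic_one
  | cons A t ih =>
    rw [List.prod_cons]
    exact (Atom.monic (hL A (by simp))).mul (ih fun B hB => hL B (by simp [hB]))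

lemma atom_prod_natDegree (L : List ℝ[X]) (hL : ∀ A ∈ L, Atom A) :
    L.prod.natDegree = (L.map natDegree).sum := by
  induction L with
  | nil => simp
  | cons A t ih =>
    rw [List.prod_cons, List.map_cons, List.sum_cons,
      Polynomial.Monic.natDegree_mul (Atom.monic (hL A (by simp)))
        (atom_prod_monic t fun B hB => hL B (by simp [hB])),
      ih (fun B hB => hL B (by simp [hB]))]

lemma split_list (s : ℕ) : ∀ L : List ℝ[X], (∀ A ∈ L, Atom A) →
    ∀ cthr : ℕ, 1 ≤ cthr → cthr ≤ (L.map natDegree).sum →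
    ∃ L1 L2 : List ℝ[X], L = L1 ++ L2 ∧ cthr ≤ (L1.map natDegree).sum ∧
      (L1.map natDegree).sum ≤ cthr + 1 := by
  intro L
  induction L with
  | nil => intro _ cthr h1 h2; simp at h2; omega
  | cons A t ih =>
    intro hL cthr h1 h2
    have hd := Atom.deg (hL A (by simp))
    by_cases hcd : cthr ≤ A.natDegree
    · exact ⟨[A], t, rfl, by simpa using hcd, by simp; omega⟩
    · push_neg at hcd
      simp only [List.map_cons, List.sum_cons] at h2
      obtain ⟨T1, T2, hT, hT1, hT2⟩ := ih (fun B hB => hL B (by simp [hB]))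
        (cthr - A.natDegree) (by omega) (by omega)
      refine ⟨A :: T1, T2, by rw [hT]; rfl, ?_, ?_⟩ <;>
        simp only [List.map_cons, List.sum_cons] <;> omega

lemma chunk (s : ℕ) (hs : 2 ≤ s) : ∀ n : ℕ, ∀ L : List ℝ[X], L.length ≤ n →
    (∀ A ∈ L, Atom A) → L ≠ [] →
    ∃ B : List ℝ[X], B ≠ [] ∧ B.prod = L.prod ∧
      (∀ b ∈ B, 1 ≤ b.natDegree ∧ b.natDegree ≤ s ∧ ∀ k, |b.coeff k| ≤ 2 ^ s) ∧
      1 + (B.length - 1) * (s - 1) ≤ (L.map natDegree).sum := by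
  intro n
  induction n with
  | zero =>
    intro L hlen _ hne
    rw [Nat.le_zero] at hlen
    exact absurd (List.length_eq_zero_iff.1 hlen) hne
  | succ n ih =>
    intro L hlen hL hne
    have hds1 : 1 ≤ (L.map natDegree).sum := by
      obtain ⟨A, t, rfl⟩ := List.exists_cons_of_ne_nil hne
      simp only [List.map_cons, List.sum_cons]
      have := (Atom.deg (hL A (by simp))).1
      omega
    by_cases hds : (L.map natDegree).sum ≤ s
    · refine ⟨[L.prod], by simp, by simp, ?_, by simp; omega⟩
      intro b hb
      rw [List.mem_singleton] at hb
      subst hb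
      rw [atom_prod_natDegree L hL]
      refine ⟨hds1, hds, fun k => ?_⟩
      calc |L.prod.coeff k| ≤ 2 ^ ((L.map natDegree).sum) := list_coeff_bound L hL k
        _ ≤ 2 ^ s := by
          apply pow_le_pow_right₀ (by norm_num) hds
    · push_neg at hds
      obtain ⟨L1, L2, rfl, h1, h2⟩ := split_list s L hL (s - 1) (by omega) (by omega)
      have hsum : (L1.map natDegree).sum + (L2.map natDegree).sum
          = ((L1 ++ L2).map natDegree).sum := by simp
      have hL1 : ∀ A ∈ L1, Atom A := fun A hA => hL A (by simp [hA])
      have hL2 : ∀ A ∈ L2, Atom A := fun A hA => hL A (by simp [hA])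
      have hL1ne : L1 ≠ [] := by
        intro h; subst h; simp at h1; omega
      have hL2ne : L2 ≠ [] := by
        intro h; subst h
        simp only [List.append_nil] at hds
        omega
      have hlen2 : L2.length ≤ n := by
        have : L1.length + L2.length ≤ n + 1 := by simpa using hlen
        have : 1 ≤ L1.length := List.length_pos_iff.2 hL1ne
        omega
      obtain ⟨B', hB'ne, hB'prod, hB'props, hB'count⟩ := ih L2 hlen2 hL2 hL2ne
      refine ⟨L1.prod :: B', by simp, ?_, ?_, ?_⟩
      · rw [List.prod_cons, hB'prod, List.prod_append]
      · intro b hb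
        rcases List.mem_cons.1 hb with rfl | hb
        · rw [atom_prod_natDegree L1 hL1]
          refine ⟨by omega, by omega, fun k => ?_⟩
          calc |L1.prod.coeff k| ≤ 2 ^ ((L1.map natDegree).sum) := list_coeff_bound L1 hL1 k
            _ ≤ 2 ^ s := by apply pow_le_pow_right₀ (by norm_num) (by omega)
        · exact hB'props b hb
      · obtain ⟨a, ha⟩ : ∃ a, B'.length = a + 1 := by
          refine ⟨B'.length - 1, ?_⟩
          have := List.length_pos_iff.2 hB'ne
          omega
        rw [ha] at hB'count
        simp only [List.length_cons, ha, ← hsum]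
        have key : (a + 1 + 1 - 1) * (s - 1) = a * (s - 1) + (s - 1) := by
          rw [Nat.add_sub_cancel, Nat.add_mul, Nat.one_mul]
        rw [key]
        have key2 : (a + 1 - 1) * (s - 1) = a * (s - 1) := by rw [Nat.add_sub_cancel]
        rw [key2] at hB'count
        omega

-- the real polynomial
noncomputable def Pr (m N : ℕ) : ℝ[X] := ∑ k ∈ Finset.range (2 * N + 4), X ^ (m * k)

lemma Wone_eq_toSeq (m N : ℕ) (hm : 1 ≤ m) : Wone m N = toSeq (Pr m N) := by
  funext i
  simp only [Wone, toSeq, Pr]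
  rcases lt_or_ge i 0 with hi | hi
  · rw [if_neg (not_le.2 hi), if_neg]
    rintro ⟨k, _, hk⟩
    have : (0:ℤ) ≤ (k:ℤ) * m := by positivity
    omega
  · rw [if_pos hi, finset_sum_coeff]
    simp only [coeff_X_pow]
    by_cases hex : ∃ k : ℕ, k ≤ 2 * N + 3 ∧ i = (k : ℤ) * (m : ℤ)
    · rw [if_pos hex]
      obtain ⟨k, hk, hik⟩ := hex
      have h1 : i = ((m * k : ℕ) : ℤ) := by rw [hik]; push_cast; ring
      rw [Finset.sum_eq_single_of_mem k (Finset.mem_range.2 (by omega))]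
      · rw [if_pos (by omega)]
      · intro b _ hbk
        rw [if_neg]
        intro hb
        have h2 : m * b = m * k := by omega
        exact hbk (Nat.eq_of_mul_eq_mul_left (by omega) h2)
    · rw [if_neg hex, Finset.sum_eq_zero]
      intro b hb
      rw [if_neg]
      intro hbeq
      have h1 : i = ((m * b : ℕ) : ℤ) := by omega
      refine hex ⟨b, by simp only [Finset.mem_range] at hb; omega, ?_⟩
      rw [h1]; push_cast; ring

lemma exists_atoms (m N : ℕ) (hm : 1 ≤ m) :
    ∃ L : List ℝ[X], (∀ A ∈ L, Atom A) ∧ L.prod = Pr m N ∧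
      (L.map natDegree).sum = (2 * N + 3) * m := by
  set n : ℕ := m * (2 * N + 4) with hn
  have hn0 : 0 < n := by positivity
  have hm0 : 0 < m := hm
  have hmn : Polynomial.nthRootsFinset m (1 : ℂ) ⊆ Polynomial.nthRootsFinset n (1 : ℂ) := by
    intro x hx
    rw [Polynomial.mem_nthRootsFinset hm0] at hx
    rw [Polynomial.mem_nthRootsFinset hn0, hn, pow_mul, hx, one_pow]
  set T : Finset ℂ := Polynomial.nthRootsFinset n (1 : ℂ) \ Polynomial.nthRootsFinset m (1 : ℂ) with hT
  have hTconj : ∀ z ∈ T, (starRingEnd ℂ) z ∈ T := by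
    intro z hz
    rw [hT, Finset.mem_sdiff] at hz ⊢
    obtain ⟨h1, h2⟩ := hz
    rw [Polynomial.mem_nthRootsFinset hn0] at h1 ⊢
    constructor
    · rw [← map_pow, h1, map_one]
    · intro hmem
      apply h2
      rw [Polynomial.mem_nthRootsFinset hm0] at hmem ⊢
      have : ((starRingEnd ℂ) z) ^ m = 1 := hmem
      have h3 : z ^ m = (starRingEnd ℂ) (((starRingEnd ℂ) z) ^ m) := by
        rw [map_pow, Complex.conj_conj]
      rw [h3, this, map_one]
  have hTnorm : ∀ z ∈ T, ‖z‖ = 1 := by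
    intro z hz
    rw [hT, Finset.mem_sdiff] at hz
    have h1 := (Polynomial.mem_nthRootsFinset hn0 (1 : ℂ)).1 hz.1
    exact Complex.norm_eq_one_of_pow_eq_one h1 (by omega)
  have hprim := Complex.isPrimitiveRoot_exp n (by omega)
  have hprimm := Complex.isPrimitiveRoot_exp m (by omega)
  have hTcard : T.card = (2 * N + 3) * m := by
    rw [hT, Finset.card_sdiff_of_subset hmn, hprim.card_nthRootsFinset, hprimm.card_nthRootsFinset]
    have : n = (2 * N + 3) * m + m := by rw [hn]; ring
    omega
  obtain ⟨L, hL, hLprod, hLdeg⟩ := pairing _ T rfl hTconj hTnorm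
  -- complex polynomial identity
  have hgeom : (∑ k ∈ Finset.range (2 * N + 4), (X : ℂ[X]) ^ (m * k)) * ((X : ℂ[X]) ^ m - 1)
      = (X : ℂ[X]) ^ n - 1 := by
    have := geom_sum_mul ((X : ℂ[X]) ^ m) (2 * N + 4)
    rw [← pow_mul] at this
    calc (∑ k ∈ Finset.range (2 * N + 4), (X : ℂ[X]) ^ (m * k)) * ((X : ℂ[X]) ^ m - 1)
        = (∑ k ∈ Finset.range (2 * N + 4), ((X : ℂ[X]) ^ m) ^ k) * ((X : ℂ[X]) ^ m - 1) := by
          congr 1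
          exact Finset.sum_congr rfl fun k _ => by rw [← pow_mul]
      _ = (X : ℂ[X]) ^ n - 1 := this
  have hXn : (X : ℂ[X]) ^ n - 1 = ∏ z ∈ Polynomial.nthRootsFinset n (1 : ℂ), (X - C z) :=
    Polynomial.X_pow_sub_one_eq_prod hn0 hprim
  have hXm : (X : ℂ[X]) ^ m - 1 = ∏ z ∈ Polynomial.nthRootsFinset m (1 : ℂ), (X - C z) :=
    Polynomial.X_pow_sub_one_eq_prod hm0 hprimm
  have hsplit : (∏ z ∈ T, (X - C z : ℂ[X])) * (∏ z ∈ Polynomial.nthRootsFinset m (1 : ℂ), (X - C z))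
      = ∏ z ∈ Polynomial.nthRootsFinset n (1 : ℂ), (X - C z) := Finset.prod_sdiff hmn
  have hXm_ne : ((X : ℂ[X]) ^ m - 1) ≠ 0 := by
    have : ((X : ℂ[X]) ^ m - C 1).Monic := Polynomial.monic_X_pow_sub_C 1 (by omega)
    simpa using this.ne_zero
  have hPc : (∑ k ∈ Finset.range (2 * N + 4), (X : ℂ[X]) ^ (m * k)) = ∏ z ∈ T, (X - C z) := by
    apply mul_right_cancel₀ hXm_ne
    rw [hgeom, hXn, ← hsplit, hXm]
  have hmapPr : (Pr m N).map (algebraMap ℝ ℂ) = ∑ k ∈ Finset.range (2 * N + 4), (X : ℂ[X]) ^ (m * k) := by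
    rw [Pr, Polynomial.map_sum]
    exact Finset.sum_congr rfl fun k _ => by rw [Polynomial.map_pow, Polynomial.map_X]
  have hinj : Function.Injective (Polynomial.map (algebraMap ℝ ℂ)) :=
    Polynomial.map_injective _ (algebraMap ℝ ℂ).injective
  refine ⟨L, hL, hinj ?_, by rw [hLdeg, hTcard]⟩
  rw [hLprod, hmapPr, hPc]

/-- Convolutional factorization of `W^{[1]}` into at most `⌈(2N+3)m/(s-1)⌉` filters,
each supported in `{0,…,s}` and with sup-norm at most `s^{s/2} 2^s`. -/
theorem Wone_factorization (s m N : ℕ) (hs : 2 ≤ s) (hm : 1 ≤ m) (hN : 1 ≤ N) :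
    ∃ (p : ℕ) (w : Fin p → ℤ → ℝ),
      p ≤ ceilDiv' ((2 * N + 3) * m) (s - 1) ∧
      (∀ j, SeqSupp s (w j)) ∧
      (∀ j, ∀ k : ℤ, |w j k| ≤ (s : ℝ) ^ ((s : ℝ) / 2) * 2 ^ s) ∧
      Wone m N = seqConvList (List.ofFn w) := by
  obtain ⟨L, hL, hLprod, hLdeg⟩ := exists_atoms m N hm
  have hLne : L ≠ [] := by
    intro h
    subst h
    simp only [List.map_nil, List.sum_nil] at hLdeg
    have : 0 < (2 * N + 3) * m := by positivity
    omega
  obtain ⟨B, hBne, hBprod, hBprops, hBcount⟩ :=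
    chunk s hs L.length L le_rfl hL hLne
  rw [hLdeg] at hBcount
  refine ⟨B.length, fun j => toSeq (B.get j), ?_, ?_, ?_, ?_⟩
  · -- counting
    obtain ⟨a, ha⟩ : ∃ a, B.length = a + 1 :=
      ⟨B.length - 1, by have := List.length_pos_iff.2 hBne; omega⟩
    rw [ha, Nat.add_sub_cancel] at hBcount
    rw [ha]
    unfold ceilDiv'
    rw [Nat.le_div_iff_mul_le (by omega)]
    have hmul : (a + 1) * (s - 1) = a * (s - 1) + (s - 1) := by ring
    rw [hmul]
    generalize a * (s - 1) = t at hBcount ⊢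
    omega
  · -- support
    intro j k hk
    have hmem : B.get j ∈ B := List.get_mem B j
    obtain ⟨hd1, hd2, _⟩ := hBprops _ hmem
    rcases hk with hk | hk
    · simp [toSeq, not_le.2 hk]
    · have hk0 : 0 ≤ k := le_trans (by positivity) hk.le
      simp only [toSeq, if_pos hk0]
      apply Polynomial.coeff_eq_zero_of_natDegree_lt
      omega
  · -- bound
    intro j k
    have hmem : B.get j ∈ B := List.get_mem B j
    obtain ⟨_, _, hcf⟩ := hBprops _ hmem
    have h1 : (1 : ℝ) ≤ (s : ℝ) ^ ((s : ℝ) / 2) :=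
      Real.one_le_rpow (by exact_mod_cast hs.trans' one_le_two) (by positivity)
    have h2 : (2 : ℝ) ^ s ≤ (s : ℝ) ^ ((s : ℝ) / 2) * 2 ^ s := by
      nlinarith [pow_pos (zero_lt_two (α := ℝ)) s]
    rcases lt_or_ge k 0 with hk | hk
    · simp only [toSeq, if_neg (not_le.2 hk), abs_zero]
      positivity
    · simp only [toSeq, if_pos hk]
      exact (hcf k.toNat).trans h2
  · -- product identity
    have hofn : List.ofFn (fun j => toSeq (B.get j)) = B.map toSeq := by
      rw [show (fun j => toSeq (B.get j)) = toSeq ∘ B.get from rfl, ← List.map_ofFn, List.ofFn_get]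
    rw [hofn, ← toSeq_list_prod, hBprod, hLprod, Wone_eq_toSeq m N hm]

end
end
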